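/- Let 0 ≤ k, ℓ ≤ r, let b − a = d − c = h > 0, and let F ∈ C^{m_k+1,n_ℓ+1}([a,b]×[c,d]) (all mixed partials F^{(i,j)} with i ≤ m_k+1, j ≤ n_ℓ+1 continuous). Then ‖F − (𝐏_{m_k} ⊕ 𝐐_{n_ℓ})F‖_{∞,[a,b]×[c,d]} ≤ K_{m_k,n_ℓ}(F)·h^{m_k+n_ℓ+2}, where K_{m,n}(F) := (1 + ‖𝐏_m ⊕ 𝐐_n‖)·‖F^{(m+1,n+1)}‖_{∞,[a,b]×[c,d]} / ( 2^{m+n+2}·(m+1)!·(n+1)! ) and ‖L‖ := sup{‖LG‖_{∞} : G ∈ C([a,b]×[c,d]), ‖G‖_∞ ≤ 1}. -/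

import Mathlib

open scoped BigOperators

noncomputable section

/-- Sup norm `‖f‖_{∞,S}` of a function over a set `S`. -/
def supN {α : Type*} (S : Set α) (f : α → ℝ) : ℝ := ⨆ z : S, |f z.1|

/-- Operator norm of `L` over continuous functions on `R` with sup norm `≤ 1`. -/
def opN {α : Type*} [TopologicalSpace α] (R : Set α) (L : (α → ℝ) → α → ℝ) : ℝ :=
  ⨆ G : {G : α → ℝ // ContinuousOn G R ∧ supN R G ≤ 1}, supN R (L G.1)

/-- Bernstein basis function `B_i^m` scaled to `[a,b]`. -/
def bern (m : ℕ) (a b : ℝ) (i : ℕ) : ℝ → ℝ := fun x =>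
  (m.choose i : ℝ) * ((b - x) / (b - a)) ^ (m - i) * ((x - a) / (b - a)) ^ i

/-- Uniform node `x_i^m = a + (i/m)(b-a)`. -/
def node (m : ℕ) (a b : ℝ) (i : ℕ) : ℝ := a + (i : ℝ) / (m : ℝ) * (b - a)

/-- Bernstein collocation matrix `T_m = (B_j^m(x_i^m))_{ij}`. -/
def Tmat (m : ℕ) (a b : ℝ) : Matrix (Fin (m + 1)) (Fin (m + 1)) ℝ := fun i j =>
  bern m a b j (node m a b i)

/-- Dual functionals `λ_j^m f = (T_m⁻¹ · (f(x_i^m))_i)_j`. -/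
def lam (m : ℕ) (a b : ℝ) (j : Fin (m + 1)) (f : ℝ → ℝ) : ℝ :=
  (Tmat m a b)⁻¹.mulVec (fun i => f (node m a b i)) j

/-- `λ_j^m` with a natural-number index (zero out of range). -/
def lamN (m : ℕ) (a b : ℝ) (j : ℕ) (f : ℝ → ℝ) : ℝ :=
  if h : j < m + 1 then lam m a b ⟨j, h⟩ f else 0

/-- The index map `α^k : i ↦ i·(m_r/m_k)` (when `m_k ∣ m_r` and `i ≤ m_k` the `min` is inert). -/
def alphaF (mk mr : ℕ) (i : Fin (mk + 1)) : Fin (mr + 1) :=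
  ⟨min (i.1 * (mr / mk)) mr, Nat.lt_succ_of_le (min_le_right _ _)⟩

/-- Degree elevation matrix `E_{m_k}^{m_r} = (λ_i^{m_r}(B_j^{m_k}))_{ij}`. -/
def Emat (mk mr : ℕ) (a b : ℝ) : Matrix (Fin (mr + 1)) (Fin (mk + 1)) ℝ := fun i j =>
  lam mr a b i (bern mk a b j)

/-- Row submatrix `E_{m_k}^{m_r}(α^k,:)`. -/
def Esub (mk mr : ℕ) (a b : ℝ) : Matrix (Fin (mk + 1)) (Fin (mk + 1)) ℝ := fun i j =>
  Emat mk mr a b (alphaF mk mr i) j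

/-- Dual basis polynomials `D_j^{m_k} = Σ_ℓ (E(α^k,:)⁻¹)_{ℓ j} B_ℓ^{m_k}`. -/
def Dq (mk mr : ℕ) (a b : ℝ) (j : Fin (mk + 1)) : ℝ → ℝ := fun x =>
  ∑ l : Fin (mk + 1), (Esub mk mr a b)⁻¹ l j * bern mk a b l x

/-- `D_j^{m_k}` with a natural-number index (zero out of range). -/
def DqN (mk mr : ℕ) (a b : ℝ) (j : ℕ) : ℝ → ℝ :=
  if h : j < mk + 1 then Dq mk mr a b ⟨j, h⟩ else 0

/-- Functionals `μ_i^{m_k} = λ_{α^k_i}^{m_r}`. -/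
def mu (mk mr : ℕ) (a b : ℝ) (i : Fin (mk + 1)) (f : ℝ → ℝ) : ℝ :=
  lam mr a b (alphaF mk mr i) f

/-- Univariate quasi-interpolant `P_{m_k} f = Σ_i (μ_i^{m_k} f)·D_i^{m_k}`. -/
def Pop (mk mr : ℕ) (a b : ℝ) (f : ℝ → ℝ) : ℝ → ℝ := fun x =>
  ∑ i : Fin (mk + 1), mu mk mr a b i f * Dq mk mr a b i x

/-- Bivariate extension `𝐏_{m_k} = P_{m_k} × I` (acting in the first variable). -/
def PP (mk mr : ℕ) (a b : ℝ) (F : ℝ × ℝ → ℝ) : ℝ × ℝ → ℝ := fun z =>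
  Pop mk mr a b (fun x => F (x, z.2)) z.1

/-- Bivariate extension `𝐐_{n_ℓ} = I × Q_{n_ℓ}` (acting in the second variable). -/
def QQ (nl nr : ℕ) (c d : ℝ) (F : ℝ × ℝ → ℝ) : ℝ × ℝ → ℝ := fun z =>
  Pop nl nr c d (fun y => F (z.1, y)) z.2

/-- Maximum absolute row sum matrix norm. -/
def rowNorm {p q : ℕ} (A : Matrix (Fin p) (Fin q) ℝ) : ℝ := ⨆ i : Fin p, ∑ j, |A i j|

/-- `C_{m_r} = max_i sup{ |λ_i^{m_r} f| : f ∈ C[a,b], ‖f‖_∞ ≤ 1 }`. -/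
def Cbase (mr : ℕ) (a b : ℝ) : ℝ :=
  ⨆ i : Fin (mr + 1),
    ⨆ f : {f : ℝ → ℝ // ContinuousOn f (Set.Icc a b) ∧ supN (Set.Icc a b) f ≤ 1},
      |lam mr a b i f.1|

/-- `C_{m_r,m_k} = C_{m_r}·(m_k+1)·‖E_{m_k}^{m_r}(α^k,:)⁻¹‖_∞`. -/
def Cconst (mk mr : ℕ) (a b : ℝ) : ℝ :=
  Cbase mr a b * ((mk : ℝ) + 1) * rowNorm (Esub mk mr a b)⁻¹

/-- `Π_m`: univariate polynomial functions of degree at most `m`. -/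
def polyF (m : ℕ) : Submodule ℝ (ℝ → ℝ) :=
  Submodule.span ℝ {f : ℝ → ℝ | ∃ i ≤ m, f = fun x => x ^ i}

/-- `Π_p ⊗ Π_q`: bivariate polynomial functions of degree `≤ p` in `x` and `≤ q` in `y`. -/
def polyF2 (p q : ℕ) : Submodule ℝ (ℝ × ℝ → ℝ) :=
  Submodule.span ℝ {F : ℝ × ℝ → ℝ | ∃ i ≤ p, ∃ j ≤ q, F = fun z => z.1 ^ i * z.2 ^ j}

/-- `S_{𝐦,𝐧} = Σ_{k=0}^r Π_{m_k} ⊗ Π_{n_{r-k}}` (as a space of functions). -/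
def SmnF (r : ℕ) (m n : ℕ → ℕ) : Submodule ℝ (ℝ × ℝ → ℝ) :=
  ∑ k ∈ Finset.range (r + 1), polyF2 (m k) (n (r - k))

/-- `Π_p ⊗ Π_q` inside the bivariate polynomial ring. -/
def PiTP (p q : ℕ) : Submodule ℝ (MvPolynomial (Fin 2) ℝ) :=
  Submodule.span ℝ {P | ∃ i ≤ p, ∃ j ≤ q,
    P = MvPolynomial.monomial (Finsupp.single 0 i + Finsupp.single 1 j) (1 : ℝ)}

/-- `S_{𝐦,𝐧} = Σ_{k=0}^r Π_{m_k} ⊗ Π_{n_{r-k}}` in the bivariate polynomial ring. -/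
def SmnP (r : ℕ) (m n : ℕ → ℕ) : Submodule ℝ (MvPolynomial (Fin 2) ℝ) :=
  ∑ k ∈ Finset.range (r + 1), PiTP (m k) (n (r - k))

/-- The rectangle `[a,b] × [c,d]`. -/
def Rect (a b c d : ℝ) : Set (ℝ × ℝ) := Set.Icc a b ×ˢ Set.Icc c d

/-- `Fd` is a system of mixed partial derivatives of `Fd 0 0` of class `C^{p,q}` on the
rectangle: all mixed partials `F^{(i,j)}`, `i ≤ p`, `j ≤ q`, exist and are continuous. -/
def IsCpq (p q : ℕ) (a b c d : ℝ) (Fd : ℕ → ℕ → ℝ × ℝ → ℝ) : Prop :=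
  (∀ i < p, ∀ j ≤ q, ∀ z ∈ Rect a b c d,
      HasDerivWithinAt (fun x => Fd i j (x, z.2)) (Fd (i + 1) j z) (Set.Icc a b) z.1) ∧
  (∀ i ≤ p, ∀ j < q, ∀ z ∈ Rect a b c d,
      HasDerivWithinAt (fun y => Fd i j (z.1, y)) (Fd i (j + 1) z) (Set.Icc c d) z.2) ∧
  (∀ i ≤ p, ∀ j ≤ q, ContinuousOn (Fd i j) (Rect a b c d))

end


open Matrix

noncomputable section Aux

/-- Toeplitz binomial entry: `C(N, c-d)` for `d ≤ c`, else `0`. -/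
def ent (N c d : ℕ) : ℝ := if d ≤ c then (N.choose (c - d) : ℝ) else 0

lemma ent_pascal (N c d : ℕ) : ent (N + 1) c d = ent N c d + ent N c (d + 1) := by
  unfold ent
  rcases lt_trichotomy c d with h | h | h
  · rw [if_neg (by omega), if_neg (by omega), if_neg (by omega)]; ring
  · subst h
    rw [if_pos le_rfl, if_pos le_rfl, if_neg (by omega)]
    simp
  · rw [if_pos (by omega), if_pos (by omega), if_pos (by omega)]
    have h1 : c - d = (c - (d+1)) + 1 := by omega
    rw [h1, Nat.choose_succ_succ]
    push_cast
    ring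

/-- The binomial minor matrix. -/
def entM {k : ℕ} (N : ℕ) (c d : Fin (k+1) → ℕ) : Matrix (Fin (k+1)) (Fin (k+1)) ℝ :=
  Matrix.of fun i j => ent N (c i) (d j)

lemma ent_zero (c d : ℕ) : ent 0 c d = if c = d then 1 else 0 := by
  unfold ent
  rcases lt_trichotomy c d with h | h | h
  · rw [if_neg (by omega), if_neg (by omega)]
  · subst h; simp
  · rw [if_pos (by omega), if_neg (by omega), Nat.choose_eq_zero_of_lt (by omega)]
    simp

/-- Base case: `N = 0`. -/
lemma det_entM_zero_nonneg {k : ℕ} (c d : Fin (k+1) → ℕ) (hc : StrictMono c)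
    (hd : StrictMono d) : 0 ≤ (entM 0 c d).det := by
  by_cases hall : ∀ i, c i = d i
  · have : entM 0 c d = 1 := by
      ext i j
      rw [entM, Matrix.of_apply, ent_zero, Matrix.one_apply]
      congr 1
      simp only [eq_iff_iff]
      constructor
      · intro h; exact hd.injective (by rw [← hall i, h])
      · intro h; subst h; exact hall i
    rw [this, Matrix.det_one]; norm_num
  · push_neg at hall
    classical
    set s := Finset.univ.filter (fun i => c i ≠ d i) with hs
    have hne : s.Nonempty := by
      obtain ⟨i, hi⟩ := hall
      exact ⟨i, by simp [hs, hi]⟩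
    set i₀ := s.min' hne with hi₀def
    have hi₀ : c i₀ ≠ d i₀ := by
      have h := s.min'_mem hne
      simp only [hs, Finset.mem_filter] at h
      exact h.2
    have hmin : ∀ i < i₀, c i = d i := by
      intro i hi
      by_contra hne'
      have : i₀ ≤ i := Finset.min'_le _ _ (by simp [hs, hne'])
      omega
    rcases lt_or_gt_of_ne hi₀ with hlt | hgt
    · -- row i₀ is zero
      refine le_of_eq (Matrix.det_eq_zero_of_row_eq_zero i₀ fun j => ?_).symm
      rw [entM, Matrix.of_apply, ent_zero, if_neg]
      rcases lt_or_ge j i₀ with hj | hj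
      · intro h
        have h1 : d j = c j := (hmin j hj).symm
        have h2 : c j < c i₀ := hc hj
        omega
      · intro h
        have : d i₀ ≤ d j := hd.monotone hj
        omega
    · -- column i₀ is zero
      refine le_of_eq (Matrix.det_eq_zero_of_column_eq_zero i₀ fun i => ?_).symm
      rw [entM, Matrix.of_apply, ent_zero, if_neg]
      rcases lt_or_ge i i₀ with hi | hi
      · rw [hmin i hi]
        exact fun h => absurd (hd.injective h) (Fin.ne_of_lt hi)
      · intro h
        have : c i₀ ≤ c i := hc.monotone hi
        omega

lemma entM_zero_eq_one {k : ℕ} {c d : Fin (k+1) → ℕ} (hd : StrictMono d)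
    (hall : ∀ i, c i = d i) : entM 0 c d = 1 := by
  ext i j
  rw [entM, Matrix.of_apply, ent_zero, Matrix.one_apply]
  congr 1
  simp only [eq_iff_iff]
  constructor
  · intro h; exact hd.injective (by rw [← hall i, h])
  · intro h; subst h; exact hall i

lemma det_entM_succ {k N : ℕ} (c d : Fin (k+1) → ℕ) :
    (entM (N+1) c d).det
      = ∑ r : Fin (k+1) → Bool, (entM N c (fun j => d j + cond (r j) 1 0)).det := by
  classical
  unfold entM
  rw [← Matrix.det_transpose]
  have key : ((Matrix.of fun i j => ent (N+1) (c i) (d j))ᵀ : Matrix (Fin (k+1)) (Fin (k+1)) ℝ)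
      = fun j => ∑ b : Bool, (fun i => ent N (c i) (d j + cond b 1 0)) := by
    ext j i
    simp only [Matrix.transpose_apply, Matrix.of_apply, Fintype.sum_bool]
    change _ = (fun i => ent N (c i) (d j + 1)) i + (fun i => ent N (c i) (d j + 0)) i
    simp [ent_pascal]
    ring
  rw [show ((Matrix.of fun i j => ent (N+1) (c i) (d j))ᵀ).det
      = Matrix.detRowAlternating ((Matrix.of fun i j => ent (N+1) (c i) (d j))ᵀ) from rfl, key]
  rw [show (Matrix.detRowAlternating
      ((fun j => ∑ b : Bool, (fun i => ent N (c i) (d j + cond b 1 0))) :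
        Matrix (Fin (k+1)) (Fin (k+1)) ℝ))
    = Matrix.detRowAlternating.toMultilinearMap
      (fun j => ∑ b : Bool, (fun i => ent N (c i) (d j + cond b 1 0))) from rfl]
  rw [MultilinearMap.map_sum]
  refine Finset.sum_congr rfl fun r _ => ?_
  rw [← Matrix.det_transpose (Matrix.of fun i j => ent N (c i) (d j + cond (r j) 1 0))]
  rfl

lemma cond_le_one (b : Bool) : (cond b 1 0 : ℕ) ≤ 1 := by cases b <;> simp

/-- All binomial minors are nonnegative (total positivity). -/
lemma det_entM_nonneg (N : ℕ) : ∀ {k : ℕ} (c d : Fin (k+1) → ℕ), StrictMono c →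
    StrictMono d → 0 ≤ (entM N c d).det := by
  induction N with
  | zero => exact fun c d hc hd => det_entM_zero_nonneg c d hc hd
  | succ N ih =>
    intro k c d hc hd
    rw [det_entM_succ]
    refine Finset.sum_nonneg fun r _ => ?_
    set d' : Fin (k+1) → ℕ := fun j => d j + cond (r j) 1 0 with hd'
    have hmono : Monotone d' := by
      intro j j' hjj'
      rcases eq_or_lt_of_le hjj' with h | h
      · subst h; exact le_rfl
      · have h1 : d j < d j' := hd h
        have h2 : (cond (r j) 1 0 : ℕ) ≤ 1 := cond_le_one _
        have h3 : (0 : ℕ) ≤ cond (r j') 1 0 := Nat.zero_le _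
        show d j + cond (r j) 1 0 ≤ d j' + cond (r j') 1 0
        omega
    by_cases hsm : StrictMono d'
    · exact ih c d' hc hsm
    · have : ∃ j j', j < j' ∧ d' j = d' j' := by
        simp only [StrictMono, not_forall] at hsm
        obtain ⟨j, j', hjj', hn⟩ := hsm
        exact ⟨j, j', hjj', le_antisymm (hmono hjj'.le) (not_lt.mp hn)⟩
      obtain ⟨j, j', hjj', heq⟩ := this
      refine le_of_eq (Matrix.det_zero_of_column_eq (Fin.ne_of_lt hjj') fun i => ?_).symm
      simp only [entM, Matrix.of_apply, heq]

/-- Positivity of the binomial minors under the window condition. -/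
lemma det_entM_pos (N : ℕ) : ∀ {k : ℕ} (c d : Fin (k+1) → ℕ), StrictMono c →
    StrictMono d → (∀ i, d i ≤ c i) → (∀ i, c i ≤ N + d i) → 0 < (entM N c d).det := by
  induction N with
  | zero =>
    intro k c d hc hd h1 h2
    have hall : ∀ i, c i = d i := fun i => le_antisymm (by simpa using h2 i) (h1 i)
    rw [entM_zero_eq_one hd hall, Matrix.det_one]
    norm_num
  | succ N ih =>
    intro k c d hc hd h1 h2
    rw [det_entM_succ]
    set r : Fin (k+1) → Bool := fun j => decide (c j = N + 1 + d j) with hr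
    set d' : Fin (k+1) → ℕ := fun j => d j + cond (r j) 1 0 with hd'
    have hdr : ∀ j, (c j = N + 1 + d j → d' j = d j + 1) ∧ (c j ≠ N + 1 + d j → d' j = d j) := by
      intro j
      constructor
      · intro h; simp [hd', hr, h]
      · intro h; simp [hd', hr, h]
    have hsm : StrictMono d' := by
      intro j j' hjj'
      have hcc : c j < c j' := hc hjj'
      have hdd : d j < d j' := hd hjj'
      by_cases hj : c j = N + 1 + d j
      · have e1 : d' j = d j + 1 := (hdr j).1 hj
        by_cases hj' : c j' = N + 1 + d j'
        · have e2 : d' j' = d j' + 1 := (hdr j').1 hj'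
          omega
        · have e2 : d' j' = d j' := (hdr j').2 hj'
          have : c j' ≤ N + 1 + d j' := h2 j'
          omega
      · have e1 : d' j = d j := (hdr j).2 hj
        have : (0:ℕ) ≤ cond (r j') 1 0 := Nat.zero_le _
        have : d' j' = d j' + cond (r j') 1 0 := rfl
        omega
    have hw1 : ∀ i, d' i ≤ c i := by
      intro i
      by_cases hi : c i = N + 1 + d i
      · rw [(hdr i).1 hi]; omega
      · rw [(hdr i).2 hi]; exact h1 i
    have hw2 : ∀ i, c i ≤ N + d' i := by
      intro i
      by_cases hi : c i = N + 1 + d i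
      · rw [(hdr i).1 hi]; omega
      · rw [(hdr i).2 hi]
        have := h2 i
        omega
    have hpos : 0 < (entM N c d').det := ih c d' hc hsm hw1 hw2
    have hterm : ∀ r' : Fin (k+1) → Bool, 0 ≤ (entM N c (fun j => d j + cond (r' j) 1 0)).det := by
      intro r'
      set d'' : Fin (k+1) → ℕ := fun j => d j + cond (r' j) 1 0 with hd''
      have hmono : Monotone d'' := by
        intro j j' hjj'
        rcases eq_or_lt_of_le hjj' with h | h
        · subst h; exact le_refl _
        · have h1 : d j < d j' := hd h
          have h2 : (cond (r' j) 1 0 : ℕ) ≤ 1 := cond_le_one _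
          have h3 : (0 : ℕ) ≤ cond (r' j') 1 0 := Nat.zero_le _
          show d j + cond (r' j) 1 0 ≤ d j' + cond (r' j') 1 0
          omega
      by_cases hsm' : StrictMono d''
      · exact det_entM_nonneg N c d'' hc hsm'
      · have : ∃ j j', j < j' ∧ d'' j = d'' j' := by
          simp only [StrictMono, not_forall] at hsm'
          obtain ⟨j, j', hjj', hn⟩ := hsm'
          exact ⟨j, j', hjj', le_antisymm (hmono hjj'.le) (not_lt.mp hn)⟩
        obtain ⟨j, j', hjj', heq⟩ := this
        refine le_of_eq (Matrix.det_zero_of_column_eq (Fin.ne_of_lt hjj') fun i => ?_).symm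
        simp only [entM, Matrix.of_apply, heq]
    calc (0:ℝ) < (entM N c d').det := hpos
      _ ≤ ∑ r' : Fin (k+1) → Bool, (entM N c (fun j => d j + cond (r' j) 1 0)).det :=
          Finset.single_le_sum (fun r' _ => hterm r') (Finset.mem_univ r)

end Aux


noncomputable section Bern

/-- `σ_i = i/m`. -/
def sig (m : ℕ) : Fin (m+1) → ℝ := fun i => (i : ℝ) / (m : ℝ)

/-- Triangular change-of-basis from monomials to Bernstein. -/
def Umat (m : ℕ) : Matrix (Fin (m+1)) (Fin (m+1)) ℝ := fun t j =>
  if j.1 ≤ t.1 then (-1:ℝ)^(t.1-j.1) * (m.choose j.1) * ((m-j.1).choose (t.1-j.1)) else 0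

lemma Tmat_entry {a b : ℝ} (hab : a < b) (m : ℕ) (i j : Fin (m+1)) :
    Tmat m a b i j = (m.choose j.1 : ℝ) * (1 - sig m i) ^ (m - j.1) * (sig m i) ^ j.1 := by
  have hba : b - a ≠ 0 := sub_ne_zero.mpr hab.ne'
  have h1 : (node m a b i - a) / (b - a) = sig m i := by
    unfold node sig
    rw [add_sub_cancel_left]
    exact mul_div_cancel_right₀ _ hba
  have h2 : (b - node m a b i) / (b - a) = 1 - sig m i := by
    rw [eq_sub_iff_add_eq, ← h1, ← add_div,
      show b - node m a b i + (node m a b i - a) = b - a by ring, div_self hba]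
  unfold Tmat bern
  rw [h1, h2]

lemma Tmat_eq_mul {a b : ℝ} (hab : a < b) (m : ℕ) :
    Tmat m a b = Matrix.vandermonde (sig m) * Umat m := by
  ext i j
  rw [Matrix.mul_apply, Tmat_entry hab]
  set s := sig m i with hs
  have : ∀ t : Fin (m+1), Matrix.vandermonde (sig m) i t * Umat m t j
      = s ^ t.1 * (if j.1 ≤ t.1 then (-1:ℝ)^(t.1-j.1) * (m.choose j.1) * ((m-j.1).choose (t.1-j.1)) else 0) := by
    intro t
    simp only [Matrix.vandermonde, Matrix.of_apply, Umat]
    rfl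
  rw [Finset.sum_congr rfl fun t _ => this t]
  rw [Fin.sum_univ_eq_sum_range
    (fun t => s ^ t * (if j.1 ≤ t then (-1:ℝ)^(t-j.1) * (m.choose j.1) * ((m-j.1).choose (t-j.1)) else 0))]
  rw [← Finset.sum_subset
    (show Finset.Ico j.1 (m+1) ⊆ Finset.range (m+1) from
      fun x hx => Finset.mem_range.mpr (Finset.mem_Ico.mp hx).2)]
  · rw [Finset.sum_Ico_eq_sum_range]
    have hjm : j.1 ≤ m := Nat.lt_succ_iff.mp j.2
    have hrange : m + 1 - j.1 = (m - j.1) + 1 := by omega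
    rw [hrange]
    have : ∀ u ∈ Finset.range ((m - j.1) + 1),
        s ^ (j.1 + u) * (if j.1 ≤ j.1 + u then (-1:ℝ)^(j.1+u-j.1) * (m.choose j.1) * ((m-j.1).choose (j.1+u-j.1)) else 0)
        = ((m.choose j.1 : ℝ) * s ^ j.1) * (((-s) ^ u) * (1:ℝ)^((m-j.1) - u) * ((m-j.1).choose u)) := by
      intro u _
      rw [if_pos (Nat.le_add_right _ _)]
      have : j.1 + u - j.1 = u := by omega
      rw [this, pow_add, neg_pow, one_pow]
      ring
    rw [Finset.sum_congr rfl this, ← Finset.mul_sum, ← add_pow (-s) 1 (m - j.1)]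
    have : -s + 1 = 1 - s := by ring
    rw [this]
    ring
  · intro t ht hts
    have h1 : t < j.1 := by
      simp only [Finset.mem_range] at ht
      simp only [Finset.mem_Ico, not_and, not_le] at hts
      by_contra h
      push_neg at h
      exact absurd (hts h) (by omega)
    rw [if_neg (by omega)]
    ring

lemma Umat_det (m : ℕ) : (Umat m).det = ∏ j : Fin (m+1), (m.choose j.1 : ℝ) := by
  rw [Matrix.det_of_lowerTriangular (Umat m) (by
    intro i j hij
    have : i < j := hij
    exact if_neg (not_le.mpr this))]
  refine Finset.prod_congr rfl fun i _ => ?_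
  rw [Umat, if_pos le_rfl]
  simp

lemma Tmat_det_isUnit {a b : ℝ} (hab : a < b) (m : ℕ) : IsUnit (Tmat m a b).det := by
  rw [Tmat_eq_mul hab, Matrix.det_mul, Matrix.det_vandermonde, Umat_det, isUnit_iff_ne_zero]
  refine mul_ne_zero ?_ ?_
  · refine Finset.prod_ne_zero_iff.mpr fun i _ => Finset.prod_ne_zero_iff.mpr fun j hj => ?_
    have hij : i < j := by simpa using hj
    have hm : 0 < m := by
      have h1 : (i : ℕ) < j.1 := hij
      have := j.2
      omega
    rw [sub_ne_zero]
    intro h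
    have hmr : (m:ℝ) ≠ 0 := Nat.cast_ne_zero.mpr (by omega)
    unfold sig at h
    rw [div_eq_div_iff hmr hmr] at h
    have : j.1 = i.1 := Nat.cast_injective (mul_right_cancel₀ hmr h)
    omega
  · refine Finset.prod_ne_zero_iff.mpr fun j _ => ?_
    exact Nat.cast_ne_zero.mpr (Nat.choose_pos (Nat.lt_succ_iff.mp j.2)).ne'

end Bern

noncomputable section Bern2

variable {a b : ℝ} {m mk mr : ℕ}

lemma lam_eq_sum (m : ℕ) (a b : ℝ) (j : Fin (m+1)) (f : ℝ → ℝ) :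
    lam m a b j f = ∑ i : Fin (m+1), (Tmat m a b)⁻¹ j i * f (node m a b i) := by
  simp [lam, Matrix.mulVec, dotProduct]

lemma lam_bern (hab : a < b) (m : ℕ) (j i : Fin (m+1)) :
    lam m a b j (bern m a b i) = if j = i then 1 else 0 := by
  have h := Matrix.nonsing_inv_mul (Tmat m a b) (Tmat_det_isUnit hab m)
  have : lam m a b j (bern m a b i) = ((Tmat m a b)⁻¹ * Tmat m a b) j i := by
    rw [Matrix.mul_apply, lam_eq_sum]
    exact Finset.sum_congr rfl fun t _ => rfl
  rw [this, h, Matrix.one_apply]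

lemma lam_comb {ι : Type*} (T : Finset ι) (c : ι → ℝ) (g : ι → ℝ → ℝ)
    (m : ℕ) (a b : ℝ) (j : Fin (m+1)) :
    lam m a b j (fun x => ∑ t ∈ T, c t * g t x) = ∑ t ∈ T, c t * lam m a b j (g t) := by
  simp only [lam_eq_sum, Finset.mul_sum]
  rw [Finset.sum_comm]
  refine Finset.sum_congr rfl fun t _ => Finset.sum_congr rfl fun i _ => by ring

/-- Degree elevation coefficients. -/
def elev (mk mr : ℕ) : Matrix (Fin (mr+1)) (Fin (mk+1)) ℝ := fun i j =>
  ent (mr - mk) i.1 j.1 * (mk.choose j.1 : ℝ) / (mr.choose i.1 : ℝ)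

lemma one_sub_ratio (hab : a < b) (x : ℝ) : (b - x) / (b - a) = 1 - (x - a) / (b - a) := by
  have hba : b - a ≠ 0 := sub_ne_zero.mpr hab.ne'
  rw [eq_sub_iff_add_eq, ← add_div, show b - x + (x - a) = b - a by ring, div_self hba]

/-- Degree elevation identity for Bernstein basis. -/
lemma bern_elev (hab : a < b) (hkr : mk ≤ mr) (j : Fin (mk+1)) (x : ℝ) :
    bern mk a b j.1 x = ∑ i : Fin (mr+1), elev mk mr i j * bern mr a b i.1 x := by
  set N := mr - mk with hN
  set s := (x - a) / (b - a) with hsdef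
  have hts : (b - x)/(b-a) = 1 - s := one_sub_ratio hab x
  have hjmk : j.1 ≤ mk := Nat.lt_succ_iff.mp j.2
  have term : ∀ i : Fin (mr+1), elev mk mr i j * bern mr a b i.1 x
      = ent N i.1 j.1 * (mk.choose j.1 : ℝ) * ((1-s) ^ (mr - i.1) * s ^ i.1) := by
    intro i
    have hc : ((mr.choose i.1 : ℕ) : ℝ) ≠ 0 :=
      Nat.cast_ne_zero.mpr (Nat.choose_pos (Nat.lt_succ_iff.mp i.2)).ne'
    unfold elev bern
    rw [hts, ← hsdef]
    rw [div_mul_eq_mul_div]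
    rw [show ent N i.1 j.1 * (mk.choose j.1 : ℝ) *
        ((mr.choose i.1 : ℝ) * (1-s) ^ (mr - i.1) * s ^ i.1)
      = (mr.choose i.1 : ℝ) * (ent N i.1 j.1 * (mk.choose j.1 : ℝ) *
        ((1-s) ^ (mr - i.1) * s ^ i.1)) from by ring]
    rw [mul_div_cancel_left₀ _ hc]
  rw [Finset.sum_congr rfl fun i _ => term i]
  rw [Fin.sum_univ_eq_sum_range
    (fun i => ent N i j.1 * (mk.choose j.1 : ℝ) * ((1-s) ^ (mr - i) * s ^ i))]
  rw [← Finset.sum_subset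
    (show Finset.Ico j.1 (mr+1) ⊆ Finset.range (mr+1) from
      fun x hx => Finset.mem_range.mpr (Finset.mem_Ico.mp hx).2)]
  · rw [Finset.sum_Ico_eq_sum_range]
    have hsub : mr + 1 - j.1 = (mr - j.1) + 1 := by omega
    rw [hsub]
    have hNle : N + 1 ≤ (mr - j.1) + 1 := by omega
    rw [← Finset.sum_subset (Finset.range_subset_range.mpr hNle)]
    · have inner : ∀ u ∈ Finset.range (N+1),
          ent N (j.1 + u) j.1 * (mk.choose j.1 : ℝ) * ((1-s) ^ (mr - (j.1+u)) * s ^ (j.1+u))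
          = ((mk.choose j.1 : ℝ) * (1-s)^(mk - j.1) * s ^ j.1) *
            (s ^ u * (1-s) ^ (N - u) * (N.choose u : ℝ)) := by
        intro u hu
        have huN : u ≤ N := Nat.lt_succ_iff.mp (Finset.mem_range.mp hu)
        have he : ent N (j.1+u) j.1 = (N.choose u : ℝ) := by
          rw [ent, if_pos (Nat.le_add_right _ _), show j.1 + u - j.1 = u from by omega]
        rw [he]
        have hexp : mr - (j.1 + u) = (mk - j.1) + (N - u) := by omega
        rw [hexp, pow_add, pow_add]
        ring
      rw [Finset.sum_congr rfl inner, ← Finset.mul_sum, ← add_pow s (1-s) N]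
      have : s + (1 - s) = 1 := by ring
      rw [this, one_pow, mul_one]
      unfold bern
      rw [hts]
    · intro u hu hu'
      have : N < u := by
        simp only [Finset.mem_range] at hu hu'
        omega
      rw [ent, if_pos (Nat.le_add_right _ _), show j.1 + u - j.1 = u by omega,
        Nat.choose_eq_zero_of_lt this]
      simp
  · intro t ht hts'
    have h1 : t < j.1 := by
      simp only [Finset.mem_range] at ht
      simp only [Finset.mem_Ico, not_and, not_le] at hts'
      by_contra h
      push_neg at h
      exact absurd (hts' h) (by omega)
    rw [ent, if_neg (by omega)]
    ring

lemma Emat_eq (hab : a < b) (hkr : mk ≤ mr) :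
    Emat mk mr a b = elev mk mr := by
  ext i j
  unfold Emat
  have hfun : (bern mk a b j.1 : ℝ → ℝ)
      = fun x => ∑ t : Fin (mr+1), elev mk mr t j * bern mr a b t.1 x :=
    funext fun x => bern_elev hab hkr j x
  rw [show (j : ℕ) = j.1 from rfl, hfun, lam_comb]
  rw [Finset.sum_congr rfl (fun t _ => by rw [lam_bern hab])]
  simp

end Bern2

noncomputable section Bern3

variable {a b : ℝ} {mk mr : ℕ}

lemma alphaF_val (hdvd : mk ∣ mr) (i : Fin (mk+1)) :
    (alphaF mk mr i).1 = i.1 * (mr / mk) := by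
  have h1 : i.1 * (mr / mk) ≤ mk * (mr / mk) :=
    Nat.mul_le_mul_right _ (Nat.lt_succ_iff.mp i.2)
  have h2 : mk * (mr / mk) = mr := Nat.mul_div_cancel' hdvd
  exact min_eq_left (by omega)

lemma Esub_eq (hab : a < b) (hkr : mk ≤ mr) :
    Esub mk mr a b = fun i j => elev mk mr (alphaF mk mr i) j := by
  funext i j
  unfold Esub
  rw [Emat_eq hab hkr]

lemma Esub_det_isUnit (hab : a < b) (hmk : 1 ≤ mk) (hkr : mk ≤ mr) (hdvd : mk ∣ mr) :
    IsUnit (Esub mk mr a b).det := by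
  set q := mr / mk with hq
  have hqm : mk * q = mr := Nat.mul_div_cancel' hdvd
  have hq1 : 1 ≤ q := by
    rcases Nat.eq_zero_or_pos q with h | h
    · rw [h, Nat.mul_zero] at hqm; omega
    · exact h
  set c : Fin (mk+1) → ℕ := fun i => i.1 * q with hc
  set d : Fin (mk+1) → ℕ := fun j => j.1 with hd
  have hdecomp : Esub mk mr a b
      = Matrix.diagonal (fun i : Fin (mk+1) => ((mr.choose (c i) : ℝ))⁻¹)
        * entM (mr - mk) c d * Matrix.diagonal (fun j : Fin (mk+1) => (mk.choose j.1 : ℝ)) := by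
    rw [Esub_eq hab hkr]
    funext i j
    rw [Matrix.mul_diagonal, Matrix.diagonal_mul]
    unfold elev
    have hα : (alphaF mk mr i).1 = c i := alphaF_val hdvd i
    rw [hα]
    unfold entM
    rw [Matrix.of_apply]
    unfold ent
    split_ifs with h
    · ring
    · ring
  rw [hdecomp, Matrix.det_mul, Matrix.det_mul, Matrix.det_diagonal, Matrix.det_diagonal,
    isUnit_iff_ne_zero]
  have hcmono : StrictMono c := by
    intro i j hij
    exact (Nat.mul_lt_mul_right (Nat.lt_of_lt_of_le Nat.zero_lt_one hq1)).mpr hij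
  have hdmono : StrictMono d := fun i j hij => hij
  have hw1 : ∀ i, d i ≤ c i := fun i => Nat.le_mul_of_pos_right _ (by omega)
  have hw2 : ∀ i, c i ≤ (mr - mk) + d i := by
    intro i
    have hile : i.1 ≤ mk := Nat.lt_succ_iff.mp i.2
    have h1 : i.1 * (q - 1) ≤ mk * (q - 1) := Nat.mul_le_mul_right _ hile
    have e1 : i.1 * q = i.1 * (q - 1) + i.1 := by
      conv_lhs => rw [show q = (q - 1) + 1 from by omega]
      rw [Nat.mul_add, Nat.mul_one]
    have e2 : mk * q = mk * (q - 1) + mk := by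
      conv_lhs => rw [show q = (q - 1) + 1 from by omega]
      rw [Nat.mul_add, Nat.mul_one]
    show i.1 * q ≤ (mr - mk) + i.1
    omega
  have hdetpos : 0 < (entM (mr - mk) c d).det := det_entM_pos _ c d hcmono hdmono hw1 hw2
  refine mul_ne_zero (mul_ne_zero ?_ hdetpos.ne') ?_
  · refine Finset.prod_ne_zero_iff.mpr fun i _ => ?_
    refine inv_ne_zero (Nat.cast_ne_zero.mpr (Nat.choose_pos ?_).ne')
    have hile : i.1 ≤ mk := Nat.lt_succ_iff.mp i.2
    have := Nat.mul_le_mul_right q hile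
    show i.1 * q ≤ mr
    omega
  · exact Finset.prod_ne_zero_iff.mpr fun j _ =>
      Nat.cast_ne_zero.mpr (Nat.choose_pos (Nat.lt_succ_iff.mp j.2)).ne'

end Bern3

noncomputable section Bern4

variable {a b : ℝ} {mk mr : ℕ}

/-- Span of the Bernstein basis functions of degree `mk`. -/
def bSpan (mk : ℕ) (a b : ℝ) : Submodule ℝ (ℝ → ℝ) :=
  Submodule.span ℝ {f | ∃ j : Fin (mk+1), f = bern mk a b j.1}

lemma mu_bern (i : Fin (mk+1)) (j : Fin (mk+1)) :
    mu mk mr a b i (bern mk a b j.1) = Esub mk mr a b i j := rfl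

lemma mu_comb {ι : Type*} (T : Finset ι) (c : ι → ℝ) (g : ι → ℝ → ℝ) (i : Fin (mk+1)) :
    mu mk mr a b i (fun x => ∑ t ∈ T, c t * g t x) = ∑ t ∈ T, c t * mu mk mr a b i (g t) :=
  lam_comb T c g mr a b _

lemma pop_bern (hEs : IsUnit (Esub mk mr a b).det) (j : Fin (mk+1)) (x : ℝ) :
    Pop mk mr a b (bern mk a b j.1) x = bern mk a b j.1 x := by
  have hinv := Matrix.nonsing_inv_mul _ hEs
  unfold Pop Dq
  rw [Finset.sum_congr rfl fun i (_ : i ∈ Finset.univ) => by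
    rw [mu_bern i j, Finset.mul_sum]]
  rw [Finset.sum_comm]
  have : ∀ l : Fin (mk+1),
      (∑ i : Fin (mk+1), Esub mk mr a b i j * ((Esub mk mr a b)⁻¹ l i * bern mk a b l.1 x))
      = ((Esub mk mr a b)⁻¹ * Esub mk mr a b) l j * bern mk a b l.1 x := by
    intro l
    rw [Matrix.mul_apply, Finset.sum_mul]
    exact Finset.sum_congr rfl fun i _ => by ring
  rw [Finset.sum_congr rfl fun l _ => this l, hinv]
  simp [Matrix.one_apply]

lemma lam_add (m : ℕ) (j : Fin (m+1)) (f g : ℝ → ℝ) :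
    lam m a b j (f + g) = lam m a b j f + lam m a b j g := by
  simp [lam_eq_sum, Finset.sum_add_distrib, mul_add]

lemma lam_smul (m : ℕ) (j : Fin (m+1)) (r : ℝ) (f : ℝ → ℝ) :
    lam m a b j (r • f) = r * lam m a b j f := by
  simp only [lam_eq_sum, Finset.mul_sum]
  exact Finset.sum_congr rfl fun i _ => by simp [Pi.smul_apply, smul_eq_mul]; ring

lemma pop_add (f g : ℝ → ℝ) (x : ℝ) :
    Pop mk mr a b (f + g) x = Pop mk mr a b f x + Pop mk mr a b g x := by
  unfold Pop mu
  rw [Finset.sum_congr rfl fun i (_ : i ∈ Finset.univ) => by rw [lam_add, add_mul]]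
  rw [Finset.sum_add_distrib]

lemma pop_smul (r : ℝ) (f : ℝ → ℝ) (x : ℝ) :
    Pop mk mr a b (r • f) x = r * Pop mk mr a b f x := by
  unfold Pop mu
  rw [Finset.sum_congr rfl fun i (_ : i ∈ Finset.univ) => by rw [lam_smul, mul_assoc]]
  rw [← Finset.mul_sum]

lemma pop_zero (x : ℝ) : Pop mk mr a b (0 : ℝ → ℝ) x = 0 := by
  unfold Pop mu
  rw [Finset.sum_congr rfl fun i (_ : i ∈ Finset.univ) => by
    rw [show lam mr a b (alphaF mk mr i) (0 : ℝ → ℝ) = 0 from by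
      simp [lam_eq_sum], zero_mul]]
  simp

/-- Reproduction: the quasi-interpolant fixes the Bernstein span. -/
lemma pop_fix (hEs : IsUnit (Esub mk mr a b).det) {f : ℝ → ℝ} (hf : f ∈ bSpan mk a b) :
    ∀ x, Pop mk mr a b f x = f x := by
  refine Submodule.span_induction ?_ ?_ ?_ ?_ hf
  · rintro g ⟨j, rfl⟩ x
    exact pop_bern hEs j x
  · intro x
    exact pop_zero x
  · intro g h _ _ hg hh x
    rw [pop_add, hg x, hh x]
    rfl
  · intro r g _ hg x
    rw [pop_smul, hg x]
    rfl

end Bern4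

noncomputable section Bern5

variable {a b : ℝ} {mk mr : ℕ}

lemma spow_rep (hab : a < b) {t : ℕ} (ht : t ≤ mk) (x : ℝ) :
    ((x - a)/(b - a))^t = ∑ j : Fin (mk+1),
      (if t ≤ j.1 then (j.1.choose t : ℝ)/(mk.choose t : ℝ) else 0) * bern mk a b j.1 x := by
  set s := (x - a) / (b - a) with hsdef
  have hts : (b - x)/(b-a) = 1 - s := one_sub_ratio hab x
  have hCt : ((mk.choose t : ℕ) : ℝ) ≠ 0 := Nat.cast_ne_zero.mpr (Nat.choose_pos ht).ne'
  have term : ∀ j : Fin (mk+1),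
      (if t ≤ j.1 then (j.1.choose t : ℝ)/(mk.choose t : ℝ) else 0) * bern mk a b j.1 x
      = (if t ≤ j.1 then ((mk-t).choose (j.1-t) : ℝ) else 0) * ((1-s) ^ (mk - j.1) * s ^ j.1) := by
    intro j
    have hjmk : j.1 ≤ mk := Nat.lt_succ_iff.mp j.2
    unfold bern
    rw [hts, ← hsdef]
    by_cases h : t ≤ j.1
    · rw [if_pos h, if_pos h]
      have hch : (mk.choose j.1 : ℝ) * (j.1.choose t : ℝ) = (mk.choose t : ℝ) * ((mk-t).choose (j.1-t) : ℝ) := by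
        rw [← Nat.cast_mul, ← Nat.cast_mul, Nat.choose_mul h]
      rw [div_mul_eq_mul_div, div_eq_iff hCt]
      linear_combination ((1-s)^(mk - j.1) * s^(j.1)) * hch
    · rw [if_neg h, if_neg h]; ring
  rw [Finset.sum_congr rfl fun j _ => term j]
  rw [Fin.sum_univ_eq_sum_range
    (fun j => (if t ≤ j then ((mk-t).choose (j-t) : ℝ) else 0) * ((1-s) ^ (mk - j) * s ^ j))]
  rw [← Finset.sum_subset
    (show Finset.Ico t (mk+1) ⊆ Finset.range (mk+1) from
      fun y hy => Finset.mem_range.mpr (Finset.mem_Ico.mp hy).2)]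
  · rw [Finset.sum_Ico_eq_sum_range]
    rw [show mk + 1 - t = (mk - t) + 1 from by omega]
    have inner : ∀ u ∈ Finset.range ((mk-t)+1),
        (if t ≤ t + u then ((mk-t).choose (t+u-t) : ℝ) else 0) * ((1-s) ^ (mk - (t+u)) * s ^ (t+u))
        = s ^ t * (s ^ u * (1-s) ^ ((mk-t) - u) * ((mk-t).choose u : ℝ)) := by
      intro u hu
      have huN : u ≤ mk - t := Nat.lt_succ_iff.mp (Finset.mem_range.mp hu)
      rw [if_pos (Nat.le_add_right _ _), show t + u - t = u from by omega,
        show mk - (t+u) = (mk - t) - u from by omega, pow_add]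
      ring
    rw [Finset.sum_congr rfl inner, ← Finset.mul_sum, ← add_pow s (1-s) (mk-t)]
    rw [show s + (1 - s) = 1 from by ring, one_pow, mul_one]
  · intro y hy hy'
    have h1 : y < t := by
      simp only [Finset.mem_range] at hy
      simp only [Finset.mem_Ico, not_and, not_le] at hy'
      by_contra h
      push_neg at h
      exact absurd (hy' h) (by omega)
    rw [if_neg (by omega)]
    ring

lemma spow_mem (hab : a < b) {t : ℕ} (ht : t ≤ mk) :
    (fun x => ((x - a)/(b - a))^t) ∈ bSpan mk a b := by
  have heq : (fun x => ((x - a)/(b - a))^t)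
      = ∑ j : Fin (mk+1), (if t ≤ j.1 then (j.1.choose t : ℝ)/(mk.choose t : ℝ) else 0)
          • bern mk a b j.1 := by
    funext x
    rw [Finset.sum_apply]
    simp only [Pi.smul_apply, smul_eq_mul]
    exact spow_rep hab ht x
  rw [heq]
  exact Submodule.sum_mem _ fun j _ =>
    Submodule.smul_mem _ _ (Submodule.subset_span ⟨j, rfl⟩)

lemma powx_mem (hab : a < b) (x0 : ℝ) {t : ℕ} (ht : t ≤ mk) :
    (fun x => (x - x0)^t) ∈ bSpan mk a b := by
  have hba : b - a ≠ 0 := sub_ne_zero.mpr hab.ne'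
  have key : ∀ x : ℝ, (x - x0)^t = ∑ u ∈ Finset.range (t+1),
      (((b-a)^u * (a-x0)^(t-u) * (t.choose u : ℝ)) * ((x-a)/(b-a))^u) := by
    intro x
    have hx : x - x0 = (b-a)*((x-a)/(b-a)) + (a - x0) := by field_simp; ring
    rw [hx, add_pow]
    refine Finset.sum_congr rfl fun u hu => ?_
    rw [mul_pow]
    ring
  have heq : (fun x => (x - x0)^t) = ∑ u ∈ Finset.range (t+1),
      ((b-a)^u * (a-x0)^(t-u) * (t.choose u : ℝ)) • (fun x => ((x-a)/(b-a))^u) := by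
    funext x
    rw [Finset.sum_apply]
    simp only [Pi.smul_apply, smul_eq_mul]
    exact key x
  rw [heq]
  refine Submodule.sum_mem _ fun u hu => Submodule.smul_mem _ _ (spow_mem hab ?_)
  have := Finset.mem_range.mp hu
  omega

/-- Sampling weights of the quasi-interpolant. -/
def wgt (mk mr : ℕ) (a b : ℝ) (i' : Fin (mr+1)) : ℝ → ℝ := fun x =>
  ∑ i : Fin (mk+1), (Tmat mr a b)⁻¹ (alphaF mk mr i) i' * Dq mk mr a b i x

/-- The quasi-interpolant only samples `f` at the nodes. -/
lemma pop_sample (f : ℝ → ℝ) (x : ℝ) :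
    Pop mk mr a b f x = ∑ i' : Fin (mr+1), wgt mk mr a b i' x * f (node mr a b i'.1) := by
  unfold Pop mu wgt
  simp only [lam_eq_sum, Finset.sum_mul]
  rw [Finset.sum_comm]
  refine Finset.sum_congr rfl fun i' _ => ?_
  exact Finset.sum_congr rfl fun i _ => by ring

lemma pop_congr {f g : ℝ → ℝ} (h : ∀ u, u ∈ Set.Icc a b → f u = g u) (hab : a ≤ b) (x : ℝ) :
    Pop mk mr a b f x = Pop mk mr a b g x := by
  rw [pop_sample, pop_sample]
  refine Finset.sum_congr rfl fun i' _ => ?_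
  rw [h _ ?_]
  · have hle : (i'.1 : ℝ) / mr ≤ 1 := by
      rcases Nat.eq_zero_or_pos mr with hmr | hmr
      · subst hmr
        have : i'.1 = 0 := by omega
        simp [this]
      · rw [div_le_one (by exact_mod_cast hmr)]
        exact_mod_cast Nat.lt_succ_iff.mp i'.2
    have h0 : (0:ℝ) ≤ (i'.1 : ℝ) / mr := by positivity
    unfold node
    constructor
    · nlinarith
    · nlinarith

lemma node_mem_Icc (hab : a ≤ b) (m i : ℕ) (hi : i ≤ m) : node m a b i ∈ Set.Icc a b := by
  have hle : (i : ℝ) / m ≤ 1 := by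
    rcases Nat.eq_zero_or_pos m with hm | hm
    · subst hm
      have : i = 0 := by omega
      simp [this]
    · rw [div_le_one (by exact_mod_cast hm)]
      exact_mod_cast hi
  have h0 : (0:ℝ) ≤ (i : ℝ) / m := by positivity
  unfold node
  constructor
  · nlinarith
  · nlinarith

lemma bern_bound (hab : a < b) (m j : ℕ) {x : ℝ} (hx : x ∈ Set.Icc a b) :
    |bern m a b j x| ≤ (m.choose j : ℝ) := by
  have hba : (0:ℝ) < b - a := sub_pos.mpr hab
  have hS0 : (0:ℝ) ≤ (x - a)/(b-a) := div_nonneg (by linarith [hx.1]) hba.le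
  have hS1 : (x - a)/(b-a) ≤ 1 := by
    rw [div_le_one hba]
    linarith [hx.2]
  have hT0 : (0:ℝ) ≤ (b - x)/(b-a) := div_nonneg (by linarith [hx.2]) hba.le
  have hT1 : (b - x)/(b-a) ≤ 1 := by
    rw [div_le_one hba]
    linarith [hx.1]
  unfold bern
  rw [abs_mul, abs_mul, abs_of_nonneg (by positivity : (0:ℝ) ≤ (m.choose j : ℝ)),
    abs_of_nonneg (pow_nonneg hT0 _), abs_of_nonneg (pow_nonneg hS0 _)]
  have h1 : ((b - x)/(b-a)) ^ (m - j) ≤ 1 := pow_le_one₀ hT0 hT1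
  have h2 : ((x - a)/(b-a)) ^ j ≤ 1 := pow_le_one₀ hS0 hS1
  have hc : (0:ℝ) ≤ (m.choose j : ℝ) := by positivity
  have e1 : (m.choose j:ℝ) * ((b-x)/(b-a))^(m-j) ≤ (m.choose j:ℝ) := by nlinarith
  have e2 : (m.choose j:ℝ) * ((b-x)/(b-a))^(m-j) * ((x-a)/(b-a))^j
      ≤ (m.choose j:ℝ) * ((b-x)/(b-a))^(m-j) * 1 :=
    mul_le_mul_of_nonneg_left h2 (mul_nonneg hc (pow_nonneg hT0 _))
  have e3 : (0:ℝ) ≤ ((b-x)/(b-a))^(m-j) := pow_nonneg hT0 _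
  nlinarith

/-- Crude bound constant for the quasi-interpolant operator. -/
def popC (mk mr : ℕ) (a b : ℝ) : ℝ :=
  ∑ i' : Fin (mr+1), ∑ i : Fin (mk+1),
    |(Tmat mr a b)⁻¹ (alphaF mk mr i) i'| *
      (∑ l : Fin (mk+1), |(Esub mk mr a b)⁻¹ l i| * (mk.choose l.1 : ℝ))

lemma popC_nonneg : 0 ≤ popC mk mr a b := by
  refine Finset.sum_nonneg fun i' _ => Finset.sum_nonneg fun i _ => ?_
  refine mul_nonneg (abs_nonneg _) (Finset.sum_nonneg fun l _ => ?_)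
  positivity

lemma wgt_bound (hab : a < b) (i' : Fin (mr+1)) {x : ℝ} (hx : x ∈ Set.Icc a b) :
    |wgt mk mr a b i' x| ≤ ∑ i : Fin (mk+1),
      |(Tmat mr a b)⁻¹ (alphaF mk mr i) i'| *
        (∑ l : Fin (mk+1), |(Esub mk mr a b)⁻¹ l i| * (mk.choose l.1 : ℝ)) := by
  refine le_trans (Finset.abs_sum_le_sum_abs _ _) (Finset.sum_le_sum fun i _ => ?_)
  rw [abs_mul]
  refine mul_le_mul_of_nonneg_left ?_ (abs_nonneg _)
  unfold Dq
  refine le_trans (Finset.abs_sum_le_sum_abs _ _) (Finset.sum_le_sum fun l _ => ?_)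
  rw [abs_mul]
  exact mul_le_mul_of_nonneg_left (bern_bound hab mk l.1 hx) (abs_nonneg _)

lemma pop_bound (hab : a < b) {f : ℝ → ℝ} {M : ℝ} {x : ℝ} (hx : x ∈ Set.Icc a b)
    (hf : ∀ u ∈ Set.Icc a b, |f u| ≤ M) :
    |Pop mk mr a b f x| ≤ popC mk mr a b * M := by
  rw [pop_sample, popC, Finset.sum_mul]
  refine le_trans (Finset.abs_sum_le_sum_abs _ _) (Finset.sum_le_sum fun i' _ => ?_)
  rw [abs_mul]
  have hM : 0 ≤ M := le_trans (abs_nonneg _) (hf a (Set.left_mem_Icc.mpr hab.le))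
  refine mul_le_mul (wgt_bound hab i' hx)
    (hf _ (node_mem_Icc hab.le mr i'.1 (Nat.lt_succ_iff.mp i'.2))) (abs_nonneg _) ?_
  refine Finset.sum_nonneg fun i _ => mul_nonneg (abs_nonneg _)
    (Finset.sum_nonneg fun l _ => by positivity)

end Bern5

noncomputable section TaylorPart

/-- Comparison/Grönwall-type step. -/
lemma gron {α β t0 K : ℝ} {p : ℕ} (hK : 0 ≤ K) {g g' : ℝ → ℝ}
    (ht0 : t0 ∈ Set.Icc α β)
    (hg : ∀ u ∈ Set.Icc α β, HasDerivWithinAt g (g' u) (Set.Icc α β) u)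
    (hb : ∀ u ∈ Set.Icc α β, |g' u| ≤ K * |u - t0| ^ p)
    (hg0 : g t0 = 0) :
    ∀ t ∈ Set.Icc α β, |g t| ≤ K * |t - t0| ^ (p+1) / ((p : ℝ) + 1) := by
  have hgcont : ContinuousOn g (Set.Icc α β) := fun u hu => (hg u hu).continuousWithinAt
  have hp1 : (0:ℝ) < (p : ℝ) + 1 := by positivity
  intro t ht
  rcases eq_or_ne t t0 with rfl | hne
  · rw [sub_self, abs_zero, hg0, abs_zero, zero_pow (Nat.succ_ne_zero p)]
    positivity
  rcases lt_or_gt_of_ne hne with hlt | hgt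
  · -- backward: t < t0
    have key : ∀ e : ℝ, |e| = 1 → 0 ≤ K * (t0 - t)^(p+1) / ((p:ℝ)+1) + e * g t := by
      intro e he
      set φ : ℝ → ℝ := fun u => K * (t0 - u)^(p+1) / ((p:ℝ)+1) + e * g u with hφ
      have hsub : Set.Icc t t0 ⊆ Set.Icc α β := Set.Icc_subset_Icc ht.1 ht0.2
      have hder : ∀ u ∈ Set.Ioo t t0,
          HasDerivAt φ (-(K * (t0 - u)^p) + e * g' u) u := by
        intro u hu
        have hu' : u ∈ Set.Icc α β := hsub (Set.Ioo_subset_Icc_self hu)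
        have h2 : HasDerivAt g (g' u) u :=
          (hg u hu').hasDerivAt (Icc_mem_nhds (lt_of_le_of_lt ht.1 hu.1)
            (lt_of_lt_of_le hu.2 ht0.2))
        have hpow : HasDerivAt (fun u : ℝ => (t0 - u)^(p+1))
            (((p:ℝ)+1) * (t0 - u)^p * (-1)) u := by
          have := ((hasDerivAt_id u).const_sub t0).fun_pow (p+1)
          simpa using this
        have h1 : HasDerivAt (fun u => K * (t0 - u)^(p+1) / ((p:ℝ)+1))
            (-(K * (t0 - u)^p)) u := by
          have := (hpow.const_mul K).div_const ((p:ℝ)+1)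
          refine this.congr_deriv ?_
          rw [div_eq_iff (by positivity)]
          ring
        exact h1.add (h2.const_mul e)
      have hanti : AntitoneOn φ (Set.Icc t t0) := by
        refine antitoneOn_of_deriv_nonpos (convex_Icc t t0) ?_ ?_ ?_
        · refine ContinuousOn.add ?_ ((hgcont.mono hsub).const_smul e)
          exact (Continuous.continuousOn (by fun_prop))
        · intro u hu
          rw [interior_Icc] at hu
          exact (hder u hu).differentiableAt.differentiableWithinAt
        · intro u hu
          rw [interior_Icc] at hu
          rw [(hder u hu).deriv]
          have hu' : u ∈ Set.Icc α β := hsub (Set.Ioo_subset_Icc_self hu)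
          have hb' := hb u hu'
          rw [abs_of_nonpos (by linarith [hu.2] : u - t0 ≤ 0)] at hb'
          have : |e * g' u| ≤ K * (t0 - u)^p := by
            rw [abs_mul, he, one_mul]
            convert hb' using 2
            ring
          have := abs_le.mp this
          linarith [this.1]
      have h1 := hanti (Set.left_mem_Icc.mpr hlt.le) (Set.right_mem_Icc.mpr hlt.le) hlt.le
      have h2 : φ t0 = 0 := by
        simp [hφ, hg0, zero_pow (Nat.succ_ne_zero p)]
      rw [h2] at h1
      exact le_trans h1 (le_of_eq rfl)
    have e1 := key 1 (by norm_num)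
    have e2 := key (-1) (by norm_num)
    rw [abs_of_neg (by linarith : t - t0 < 0),
      show -(t - t0) = t0 - t from by ring, abs_le]
    constructor <;> [linarith [e2]; linarith [e1]]
  · -- forward: t0 < t
    have key : ∀ e : ℝ, |e| = 1 → 0 ≤ K * (t - t0)^(p+1) / ((p:ℝ)+1) + e * g t := by
      intro e he
      set φ : ℝ → ℝ := fun u => K * (u - t0)^(p+1) / ((p:ℝ)+1) + e * g u with hφ
      have hsub : Set.Icc t0 t ⊆ Set.Icc α β := Set.Icc_subset_Icc ht0.1 ht.2
      have hder : ∀ u ∈ Set.Ioo t0 t,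
          HasDerivAt φ (K * (u - t0)^p + e * g' u) u := by
        intro u hu
        have hu' : u ∈ Set.Icc α β := hsub (Set.Ioo_subset_Icc_self hu)
        have h2 : HasDerivAt g (g' u) u :=
          (hg u hu').hasDerivAt (Icc_mem_nhds (lt_of_le_of_lt ht0.1 hu.1)
            (lt_of_lt_of_le hu.2 ht.2))
        have hpow : HasDerivAt (fun u : ℝ => (u - t0)^(p+1))
            (((p:ℝ)+1) * (u - t0)^p * 1) u := by
          have := ((hasDerivAt_id u).sub_const t0).fun_pow (p+1)
          simpa using this
        have h1 : HasDerivAt (fun u => K * (u - t0)^(p+1) / ((p:ℝ)+1))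
            (K * (u - t0)^p) u := by
          have := (hpow.const_mul K).div_const ((p:ℝ)+1)
          refine this.congr_deriv ?_
          rw [div_eq_iff (by positivity)]
          ring
        exact h1.add (h2.const_mul e)
      have hmono : MonotoneOn φ (Set.Icc t0 t) := by
        refine monotoneOn_of_deriv_nonneg (convex_Icc t0 t) ?_ ?_ ?_
        · refine ContinuousOn.add ?_ ((hgcont.mono hsub).const_smul e)
          exact (Continuous.continuousOn (by fun_prop))
        · intro u hu
          rw [interior_Icc] at hu
          exact (hder u hu).differentiableAt.differentiableWithinAt
        · intro u hu
          rw [interior_Icc] at hu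
          rw [(hder u hu).deriv]
          have hu' : u ∈ Set.Icc α β := hsub (Set.Ioo_subset_Icc_self hu)
          have hb' := hb u hu'
          rw [abs_of_nonneg (by linarith [hu.1] : (0:ℝ) ≤ u - t0)] at hb'
          have : |e * g' u| ≤ K * (u - t0)^p := by
            rw [abs_mul, he, one_mul]
            exact hb'
          have := abs_le.mp this
          linarith [this.1]
      have h1 := hmono (Set.left_mem_Icc.mpr hgt.le) (Set.right_mem_Icc.mpr hgt.le) hgt.le
      have h2 : φ t0 = 0 := by
        simp [hφ, hg0, zero_pow (Nat.succ_ne_zero p)]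
      rw [h2] at h1
      exact h1
    have e1 := key 1 (by norm_num)
    have e2 := key (-1) (by norm_num)
    rw [abs_of_pos (by linarith : (0:ℝ) < t - t0)]
    rw [abs_le]
    constructor <;> [linarith [e2]; linarith [e1]]

end TaylorPart

noncomputable section TaylorPart2

/-- Taylor's theorem with explicit derivative system and sup-norm remainder bound. -/
lemma taylor_err {α β : ℝ} : ∀ (p : ℕ) (f : ℕ → ℝ → ℝ) (M : ℝ),
    (∀ i ≤ p, ∀ u ∈ Set.Icc α β, HasDerivWithinAt (f i) (f (i+1) u) (Set.Icc α β) u) →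
    (∀ u ∈ Set.Icc α β, |f (p+1) u| ≤ M) →
    ∀ t0 ∈ Set.Icc α β, ∀ t ∈ Set.Icc α β,
      |f 0 t - ∑ i ∈ Finset.range (p+1), f i t0 * (t - t0)^i / (i.factorial : ℝ)|
        ≤ M * |t - t0|^(p+1) / ((p+1).factorial : ℝ) := by
  intro p
  induction p with
  | zero =>
    intro f M hch hM t0 ht0 t ht
    have hM0 : 0 ≤ M := le_trans (abs_nonneg _) (hM t0 ht0)
    have key := gron (p := 0) hM0 ht0 (g := fun u => f 0 u - f 0 t0) (g' := fun u => f 1 u)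
      (fun u hu => (hch 0 le_rfl u hu).sub_const _)
      (fun u hu => by simpa using hM u hu) (by simp) t ht
    simpa using key
  | succ p ih =>
    intro f M hch hM t0 ht0 t ht
    have hM0 : 0 ≤ M := le_trans (abs_nonneg _) (hM t0 ht0)
    have hfacpos : (0:ℝ) < ((p+1).factorial : ℝ) := by
      exact_mod_cast Nat.factorial_pos (p+1)
    set R : ℝ → ℝ := fun u => f 0 u -
      ∑ i ∈ Finset.range (p+2), f i t0 * (u - t0)^i / (i.factorial : ℝ) with hR
    set R' : ℝ → ℝ := fun u => f 1 u -
      ∑ i ∈ Finset.range (p+1), f (i+1) t0 * (u - t0)^i / (i.factorial : ℝ) with hR'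
    have hRd : ∀ u ∈ Set.Icc α β, HasDerivWithinAt R (R' u) (Set.Icc α β) u := by
      intro u hu
      have hsum : HasDerivWithinAt
          (fun v => ∑ i ∈ Finset.range (p+2), f i t0 * (v - t0)^i / (i.factorial : ℝ))
          (∑ i ∈ Finset.range (p+2),
            f i t0 * ((i:ℝ) * (u - t0)^(i-1) * 1) / (i.factorial : ℝ)) (Set.Icc α β) u := by
        refine HasDerivWithinAt.fun_sum fun i _ => ?_
        exact (((hasDerivWithinAt_id u _).sub_const t0).fun_pow i).const_mul (f i t0)
          |>.div_const _
      have hval : (∑ i ∈ Finset.range (p+2),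
            f i t0 * ((i:ℝ) * (u - t0)^(i-1) * 1) / (i.factorial : ℝ))
          = ∑ i ∈ Finset.range (p+1), f (i+1) t0 * (u - t0)^i / (i.factorial : ℝ) := by
        rw [Finset.sum_range_succ']
        simp only [Nat.cast_zero, zero_mul, mul_zero, mul_one, zero_div, add_zero]
        refine Finset.sum_congr rfl fun i _ => ?_
        have hif : ((i+1).factorial : ℝ) = ((i:ℝ)+1) * (i.factorial : ℝ) := by
          rw [Nat.factorial_succ]
          push_cast
          ring
        have hifne : (i.factorial : ℝ) ≠ 0 := by
          exact_mod_cast (Nat.factorial_pos i).ne'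
        rw [hif]
        have : (i+1:ℕ) - 1 = i := by omega
        rw [this]
        push_cast
        field_simp
      exact ((hch 0 (by omega) u hu).sub (hval ▸ hsum))
    have hR0 : R t0 = 0 := by
      rw [hR]
      simp only
      rw [Finset.sum_eq_single_of_mem 0 (Finset.mem_range.mpr (by omega))]
      · simp
      · intro i _ hi
        rw [sub_self, zero_pow hi]
        simp
    have hR'b : ∀ u ∈ Set.Icc α β, |R' u| ≤ (M / ((p+1).factorial : ℝ)) * |u - t0|^(p+1) := by
      intro u hu
      have := ih (fun i => f (i+1)) M
        (fun i hi v hv => hch (i+1) (by omega) v hv)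
        (fun v hv => hM v hv) t0 ht0 u hu
      calc |R' u| ≤ M * |u - t0|^(p+1) / ((p+1).factorial : ℝ) := this
        _ = (M / ((p+1).factorial : ℝ)) * |u - t0|^(p+1) := by ring
    have hK0 : 0 ≤ M / ((p+1).factorial : ℝ) := div_nonneg hM0 hfacpos.le
    have key := gron hK0 ht0 hRd hR'b hR0 t ht
    have hfin : (M / ((p+1).factorial : ℝ)) * |t - t0|^(p+1+1) / ((p+1:ℕ) + 1 : ℝ)
        = M * |t - t0|^(p+2) / ((p+2).factorial : ℝ) := by
      have h2 : ((p+2).factorial : ℝ) = ((p:ℝ)+2) * ((p+1).factorial : ℝ) := by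
        rw [show p+2 = (p+1)+1 from rfl, Nat.factorial_succ]
        push_cast
        ring
      have hc : ((p+1:ℕ):ℝ) + 1 = (p:ℝ) + 2 := by push_cast; ring
      rw [div_mul_eq_mul_div, div_div, h2, hc]
      ring
    rw [hfin] at key
    exact key

end TaylorPart2

noncomputable section SupPart

lemma supN_le {γ : Type*} {S : Set γ} {f : γ → ℝ} {cc : ℝ} (hc : 0 ≤ cc)
    (h : ∀ z ∈ S, |f z| ≤ cc) : supN S f ≤ cc :=
  Real.iSup_le (fun z => h z.1 z.2) hc

lemma le_supN {γ : Type*} {S : Set γ} {f : γ → ℝ} {cc : ℝ}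
    (h : ∀ z ∈ S, |f z| ≤ cc) {z : γ} (hz : z ∈ S) : |f z| ≤ supN S f :=
  le_ciSup (f := fun z : S => |f z.1|)
    ⟨cc, by rintro y ⟨w, rfl⟩; exact h w.1 w.2⟩ ⟨z, hz⟩

end SupPart

noncomputable section OpPart

variable {a b c d : ℝ} {mk mr nl nr : ℕ}

lemma PP_sample (H : ℝ × ℝ → ℝ) (z : ℝ × ℝ) :
    PP mk mr a b H z = ∑ i' : Fin (mr+1), wgt mk mr a b i' z.1 * H (node mr a b i'.1, z.2) :=
  pop_sample _ _

lemma QQ_sample (H : ℝ × ℝ → ℝ) (z : ℝ × ℝ) :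
    QQ nl nr c d H z = ∑ j' : Fin (nr+1), wgt nl nr c d j' z.2 * H (z.1, node nr c d j'.1) :=
  pop_sample _ _

lemma pop_sub' (f g : ℝ → ℝ) (x : ℝ) :
    Pop mk mr a b (fun u => f u - g u) x = Pop mk mr a b f x - Pop mk mr a b g x := by
  simp only [pop_sample, mul_sub]
  rw [Finset.sum_sub_distrib]

lemma pop_cmul (r : ℝ) (f : ℝ → ℝ) (x : ℝ) :
    Pop mk mr a b (fun u => r * f u) x = r * Pop mk mr a b f x := by
  simp only [pop_sample, Finset.mul_sum]
  exact Finset.sum_congr rfl fun i _ => by ring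

lemma PP_sub (H1 H2 : ℝ × ℝ → ℝ) (z : ℝ × ℝ) :
    PP mk mr a b (fun w => H1 w - H2 w) z = PP mk mr a b H1 z - PP mk mr a b H2 z :=
  pop_sub' _ _ _

lemma PP_cmul (r : ℝ) (H : ℝ × ℝ → ℝ) (z : ℝ × ℝ) :
    PP mk mr a b (fun w => r * H w) z = r * PP mk mr a b H z :=
  pop_cmul _ _ _

lemma QQ_sub (H1 H2 : ℝ × ℝ → ℝ) (z : ℝ × ℝ) :
    QQ nl nr c d (fun w => H1 w - H2 w) z = QQ nl nr c d H1 z - QQ nl nr c d H2 z :=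
  pop_sub' _ _ _

lemma QQ_cmul (r : ℝ) (H : ℝ × ℝ → ℝ) (z : ℝ × ℝ) :
    QQ nl nr c d (fun w => r * H w) z = r * QQ nl nr c d H z :=
  pop_cmul _ _ _

lemma PP_bound (hab : a < b) (hcd : c < d) {H : ℝ × ℝ → ℝ} {M : ℝ} {z : ℝ × ℝ}
    (hz : z ∈ Rect a b c d) (hH : ∀ w ∈ Rect a b c d, |H w| ≤ M) :
    |PP mk mr a b H z| ≤ popC mk mr a b * M := by
  have hz' := hz
  rw [Rect, Set.mem_prod] at hz'
  exact pop_bound hab hz'.1 fun u hu =>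
    hH (u, z.2) (by rw [Rect, Set.mem_prod]; exact ⟨hu, hz'.2⟩)

lemma QQ_bound (hab : a < b) (hcd : c < d) {H : ℝ × ℝ → ℝ} {M : ℝ} {z : ℝ × ℝ}
    (hz : z ∈ Rect a b c d) (hH : ∀ w ∈ Rect a b c d, |H w| ≤ M) :
    |QQ nl nr c d H z| ≤ popC nl nr c d * M := by
  have hz' := hz
  rw [Rect, Set.mem_prod] at hz'
  exact pop_bound hcd hz'.2 fun u hu =>
    hH (z.1, u) (by rw [Rect, Set.mem_prod]; exact ⟨hz'.1, hu⟩)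

/-- `𝐏` fixes functions whose `x`-sections lie in the Bernstein span. -/
lemma PP_fix (hEs : IsUnit (Esub mk mr a b).det) {H : ℝ × ℝ → ℝ}
    (hH : ∀ y : ℝ, (fun x => H (x, y)) ∈ bSpan mk a b) (z : ℝ × ℝ) :
    PP mk mr a b H z = H z :=
  pop_fix hEs (hH z.2) z.1

lemma QQ_fix (hEs : IsUnit (Esub nl nr c d).det) {H : ℝ × ℝ → ℝ}
    (hH : ∀ x : ℝ, (fun y => H (x, y)) ∈ bSpan nl c d) (z : ℝ × ℝ) :
    QQ nl nr c d H z = H z :=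
  pop_fix hEs (hH z.1) z.2

/-- `𝐐` preserves the property that `x`-sections lie in the Bernstein span. -/
lemma secX_QQ {H : ℝ × ℝ → ℝ}
    (hH : ∀ y : ℝ, (fun x => H (x, y)) ∈ bSpan mk a b) :
    ∀ y : ℝ, (fun x => QQ nl nr c d H (x, y)) ∈ bSpan mk a b := by
  intro y
  have : (fun x => QQ nl nr c d H (x, y))
      = ∑ j' : Fin (nr+1), (wgt nl nr c d j' y) • (fun x => H (x, node nr c d j'.1)) := by
    funext x
    rw [QQ_sample, Finset.sum_apply]
    simp only [Pi.smul_apply, smul_eq_mul]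
  rw [this]
  exact Submodule.sum_mem _ fun j' _ => Submodule.smul_mem _ _ (hH _)

end OpPart

noncomputable section OpPart2

variable {a b c d : ℝ} {mk mr nl nr : ℕ}

lemma pop_add' (f g : ℝ → ℝ) (x : ℝ) :
    Pop mk mr a b (fun u => f u + g u) x = Pop mk mr a b f x + Pop mk mr a b g x := by
  simp only [pop_sample, mul_add]
  rw [Finset.sum_add_distrib]

lemma PP_add' (H1 H2 : ℝ × ℝ → ℝ) (z : ℝ × ℝ) :
    PP mk mr a b (fun w => H1 w + H2 w) z = PP mk mr a b H1 z + PP mk mr a b H2 z :=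
  pop_add' _ _ _

lemma QQ_add' (H1 H2 : ℝ × ℝ → ℝ) (z : ℝ × ℝ) :
    QQ nl nr c d (fun w => H1 w + H2 w) z = QQ nl nr c d H1 z + QQ nl nr c d H2 z :=
  pop_add' _ _ _

lemma mem_Rect {z : ℝ × ℝ} : z ∈ Rect a b c d ↔ z.1 ∈ Set.Icc a b ∧ z.2 ∈ Set.Icc c d :=
  Set.mem_prod

lemma chain_le_dvd (m : ℕ → ℕ) (r : ℕ) (hm0 : 0 < m 0)
    (hmi : ∀ k < r, m k < m (k+1)) (hmd : ∀ k < r, m k ∣ m (k+1)) :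
    ∀ k ≤ r, (m k ∣ m r ∧ m k ≤ m r ∧ 1 ≤ m k) := by
  have key : ∀ j, j ≤ r → ∀ k, k ≤ j → m k ∣ m j ∧ m k ≤ m j := by
    intro j
    induction j with
    | zero =>
      intro _ k hk
      have : k = 0 := by omega
      subst this
      exact ⟨dvd_rfl, le_rfl⟩
    | succ j ihj =>
      intro hj k hk
      rcases Nat.eq_or_lt_of_le hk with h | h
      · subst h; exact ⟨dvd_rfl, le_rfl⟩
      · have hij := ihj (by omega) k (by omega)
        exact ⟨dvd_trans hij.1 (hmd j (by omega)),
          le_trans hij.2 (le_of_lt (hmi j (by omega)))⟩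
  intro k hk
  obtain ⟨h1, h2⟩ := key r le_rfl k hk
  have h3 := (key k hk 0 (Nat.zero_le _)).2
  exact ⟨h1, h2, by omega⟩

end OpPart2

/-- Error of the Boolean sum `𝐏_{m_k} ⊕ 𝐐_{n_ℓ}` for `F ∈ C^{m_k+1,n_ℓ+1}`:
`‖F − (𝐏_{m_k} ⊕ 𝐐_{n_ℓ})F‖_∞ ≤ K_{m_k,n_ℓ}(F)·h^{m_k+n_ℓ+2}`. -/
theorem stmt16 (a b c d : ℝ) (hab : a < b) (hcd : c < d) (r : ℕ) (m n : ℕ → ℕ)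
    (hm0 : 0 < m 0) (hn0 : 0 < n 0)
    (hmi : ∀ k < r, m k < m (k + 1)) (hni : ∀ k < r, n k < n (k + 1))
    (hmd : ∀ k < r, m k ∣ m (k + 1)) (hnd : ∀ k < r, n k ∣ n (k + 1))
    (hsq : b - a = d - c) (k l : ℕ) (hk : k ≤ r) (hl : l ≤ r)
    (Fd : ℕ → ℕ → ℝ × ℝ → ℝ) (hF : IsCpq (m k + 1) (n l + 1) a b c d Fd) :
    supN (Rect a b c d)
        (fun z => Fd 0 0 z -
          (PP (m k) (m r) a b (Fd 0 0) z + QQ (n l) (n r) c d (Fd 0 0) z -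
            PP (m k) (m r) a b (QQ (n l) (n r) c d (Fd 0 0)) z)) ≤
      (1 + opN (Rect a b c d)
            (fun G z => PP (m k) (m r) a b G z + QQ (n l) (n r) c d G z -
              PP (m k) (m r) a b (QQ (n l) (n r) c d G) z)) *
          supN (Rect a b c d) (Fd (m k + 1) (n l + 1)) /
          ((2 : ℝ) ^ (m k + n l + 2) * ((m k + 1).factorial : ℝ) *
            ((n l + 1).factorial : ℝ)) *
        (b - a) ^ (m k + n l + 2) := by
  obtain ⟨hmdvd, hmle, hm1⟩ := chain_le_dvd m r hm0 hmi hmd k hk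
  obtain ⟨hndvd, hnle, hn1⟩ := chain_le_dvd n r hn0 hni hnd l hl
  have hEx : IsUnit (Esub (m k) (m r) a b).det := Esub_det_isUnit hab hm1 hmle hmdvd
  have hEy : IsUnit (Esub (n l) (n r) c d).det := Esub_det_isUnit hcd hn1 hnle hndvd
  have hRne : ((a, c) : ℝ × ℝ) ∈ Rect a b c d :=
    mem_Rect.mpr ⟨⟨le_rfl, hab.le⟩, ⟨le_rfl, hcd.le⟩⟩
  have hRcomp : IsCompact (Rect a b c d) := IsCompact.prod isCompact_Icc isCompact_Icc
  set x0 : ℝ := (a + b) / 2 with hx0def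
  set y0 : ℝ := (c + d) / 2 with hy0def
  have hx0 : x0 ∈ Set.Icc a b := ⟨by rw [hx0def]; linarith, by rw [hx0def]; linarith⟩
  have hy0 : y0 ∈ Set.Icc c d := ⟨by rw [hy0def]; linarith, by rw [hy0def]; linarith⟩
  have hFc := hF.2.2
  set A : ℝ := supN (Rect a b c d) (Fd (m k + 1) (n l + 1)) with hA
  have hAub : ∀ z ∈ Rect a b c d, |Fd (m k + 1) (n l + 1) z| ≤ A := by
    obtain ⟨C0, hC0⟩ := hRcomp.exists_bound_of_continuousOn (hFc (m k + 1) le_rfl (n l + 1) le_rfl)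
    intro z hz
    exact le_supN (fun w hw => by simpa using hC0 w hw) hz
  have hA0 : 0 ≤ A := le_trans (abs_nonneg _) (hAub _ hRne)
  -- The Taylor blending function
  set sV : ℝ × ℝ → ℝ := fun z => ∑ j ∈ Finset.range (n l + 1),
    Fd 0 j (z.1, y0) * (z.2 - y0) ^ j / (j.factorial : ℝ) with hsV
  set sU : ℝ × ℝ → ℝ := fun z => ∑ i ∈ Finset.range (m k + 1),
    Fd i 0 (x0, z.2) * (z.1 - x0) ^ i / (i.factorial : ℝ) with hsU
  set sW : ℝ × ℝ → ℝ := fun z => ∑ i ∈ Finset.range (m k + 1),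
    (∑ j ∈ Finset.range (n l + 1), Fd i j (x0, y0) * (z.2 - y0) ^ j / (j.factorial : ℝ))
      * (z.1 - x0) ^ i / (i.factorial : ℝ) with hsW
  set sB : ℝ × ℝ → ℝ := fun z => sV z + sU z - sW z with hsB
  set cB : ℝ := A * (b - a) ^ (m k + n l + 2) /
    ((2 : ℝ) ^ (m k + n l + 2) * ((m k + 1).factorial : ℝ) * ((n l + 1).factorial : ℝ)) with hcB
  have hcB0 : 0 ≤ cB := by
    rw [hcB]
    apply div_nonneg (mul_nonneg hA0 (pow_nonneg (by linarith) _)) (by positivity)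
  -- Taylor estimate
  have hTay : ∀ z ∈ Rect a b c d, |Fd 0 0 z - sB z| ≤ cB := by
    have hydist : ∀ y ∈ Set.Icc c d, |y - y0| ≤ (b - a) / 2 := by
      intro y hy
      rw [abs_le, hy0def]
      constructor
      · linarith [hy.1, hy.2]
      · linarith [hy.1, hy.2]
    have hxdist : ∀ x ∈ Set.Icc a b, |x - x0| ≤ (b - a) / 2 := by
      intro x hx
      rw [abs_le, hx0def]
      constructor
      · linarith [hx.1, hx.2]
      · linarith [hx.1, hx.2]
    set B1 : ℝ := A * ((b - a)/2) ^ (n l + 1) / ((n l + 1).factorial : ℝ) with hB1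
    have hB10 : 0 ≤ B1 := by
      rw [hB1]
      exact div_nonneg (mul_nonneg hA0 (pow_nonneg (by linarith) _)) (by positivity)
    have hfay : (0:ℝ) < ((n l + 1).factorial : ℝ) := by exact_mod_cast Nat.factorial_pos _
    have hfax : (0:ℝ) < ((m k + 1).factorial : ℝ) := by exact_mod_cast Nat.factorial_pos _
    have hGtop : ∀ z ∈ Rect a b c d,
        |Fd (m k + 1) 0 z - ∑ j ∈ Finset.range (n l + 1),
          Fd (m k + 1) j (z.1, y0) * (z.2 - y0) ^ j / (j.factorial : ℝ)| ≤ B1 := by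
      intro z hz
      obtain ⟨hz1, hz2⟩ := mem_Rect.mp hz
      have ht := taylor_err (α := c) (β := d) (n l) (fun j y => Fd (m k + 1) j (z.1, y)) A
        (fun j hj y hy => hF.2.1 (m k + 1) le_rfl j (by omega) (z.1, y) (mem_Rect.mpr ⟨hz1, hy⟩))
        (fun y hy => hAub (z.1, y) (mem_Rect.mpr ⟨hz1, hy⟩)) y0 hy0 z.2 hz2
    -- identify and bound
      have hb2 : A * |z.2 - y0| ^ (n l + 1) / ((n l + 1).factorial : ℝ) ≤ B1 := by
        rw [hB1]
        refine (div_le_div_iff_of_pos_right hfay).mpr (mul_le_mul_of_nonneg_left ?_ hA0)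
        exact pow_le_pow_left₀ (abs_nonneg _) (hydist z.2 hz2) _
      refine le_trans (le_of_eq ?_) (le_trans ht hb2)
      congr 1
    have hchX : ∀ zy ∈ Set.Icc c d, ∀ i ≤ m k, ∀ x ∈ Set.Icc a b,
        HasDerivWithinAt (fun x => Fd i 0 (x, zy) - ∑ j ∈ Finset.range (n l + 1),
            Fd i j (x, y0) * (zy - y0) ^ j / (j.factorial : ℝ))
          (Fd (i+1) 0 (x, zy) - ∑ j ∈ Finset.range (n l + 1),
            Fd (i+1) j (x, y0) * (zy - y0) ^ j / (j.factorial : ℝ)) (Set.Icc a b) x := by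
      intro zy hzy i hi x hx
      have h1 : HasDerivWithinAt (fun x => Fd i 0 (x, zy)) (Fd (i+1) 0 (x, zy))
          (Set.Icc a b) x := hF.1 i (by omega) 0 (by omega) (x, zy) (mem_Rect.mpr ⟨hx, hzy⟩)
      have h2 : HasDerivWithinAt (fun x => ∑ j ∈ Finset.range (n l + 1),
          Fd i j (x, y0) * (zy - y0) ^ j / (j.factorial : ℝ))
          (∑ j ∈ Finset.range (n l + 1),
            Fd (i+1) j (x, y0) * (zy - y0) ^ j / (j.factorial : ℝ)) (Set.Icc a b) x := by
        refine HasDerivWithinAt.fun_sum fun j hj => ?_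
        have hd := hF.1 i (by omega) j (by have := Finset.mem_range.mp hj; omega) (x, y0)
          (mem_Rect.mpr ⟨hx, hy0⟩)
        exact (hd.mul_const _).div_const _
      exact h1.sub h2
    intro z hz
    obtain ⟨zx, zy⟩ := z
    obtain ⟨hz1, hz2⟩ := mem_Rect.mp hz
    have hky := taylor_err (α := a) (β := b) (m k)
      (fun i x => Fd i 0 (x, zy) - ∑ j ∈ Finset.range (n l + 1),
        Fd i j (x, y0) * (zy - y0) ^ j / (j.factorial : ℝ)) B1
      (fun i hi x hx => hchX zy hz2 i hi x hx)
      (fun x hx => hGtop (x, zy) (mem_Rect.mpr ⟨hx, hz2⟩)) x0 hx0 zx hz1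
    have e1 : ∑ i ∈ Finset.range (m k + 1),
        (Fd i 0 (x0, zy) - ∑ j ∈ Finset.range (n l + 1),
          Fd i j (x0, y0) * (zy - y0) ^ j / (j.factorial : ℝ)) * (zx - x0) ^ i / (i.factorial : ℝ)
        = sU (zx, zy) - sW (zx, zy) := by
      rw [hsU, hsW]
      simp only
      rw [← Finset.sum_sub_distrib]
      exact Finset.sum_congr rfl fun i _ => by ring
    have e2 : Fd 0 0 (zx, zy) - sB (zx, zy)
        = (Fd 0 0 (zx, zy) - ∑ j ∈ Finset.range (n l + 1),
            Fd 0 j (zx, y0) * (zy - y0) ^ j / (j.factorial : ℝ))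
          - (sU (zx, zy) - sW (zx, zy)) := by
      rw [hsB, hsV]
      simp only
      ring
    rw [e2, ← e1]
    refine le_trans hky ?_
    have hb3 : |zx - x0| ^ (m k + 1) ≤ ((b - a)/2) ^ (m k + 1) :=
      pow_le_pow_left₀ (abs_nonneg _) (hxdist zx hz1) _
    have hstep : B1 * |zx - x0| ^ (m k + 1) / ((m k + 1).factorial : ℝ)
        ≤ B1 * ((b - a)/2) ^ (m k + 1) / ((m k + 1).factorial : ℝ) :=
      (div_le_div_iff_of_pos_right hfax).mpr (mul_le_mul_of_nonneg_left hb3 hB10)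
    refine le_trans hstep (le_of_eq ?_)
    rw [hB1, hcB, show m k + n l + 2 = (n l + 1) + (m k + 1) from by omega,
      pow_add, pow_add, div_pow]
    have h2ne : ((2:ℝ) ^ (n l + 1)) ≠ 0 := by positivity
    have h2ne' : ((2:ℝ) ^ (m k + 1)) ≠ 0 := by positivity
    simp only [div_pow]
    field_simp
    ring
  -- continuity of sB
  have hsBc : ContinuousOn sB (Rect a b c d) := by
    have hmapX : Set.MapsTo (fun z : ℝ × ℝ => (z.1, y0)) (Rect a b c d) (Rect a b c d) :=
      fun z hz => mem_Rect.mpr ⟨(mem_Rect.mp hz).1, hy0⟩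
    have hmapY : Set.MapsTo (fun z : ℝ × ℝ => (x0, z.2)) (Rect a b c d) (Rect a b c d) :=
      fun z hz => mem_Rect.mpr ⟨hx0, (mem_Rect.mp hz).2⟩
    have hVc : ContinuousOn sV (Rect a b c d) := by
      rw [hsV]
      refine continuousOn_finset_sum _ fun j hj => ContinuousOn.div_const (ContinuousOn.mul
        ?_ ((continuous_snd.sub continuous_const).pow j).continuousOn) _
      exact (hFc 0 (by omega) j (by have := Finset.mem_range.mp hj; omega)).comp
        ((continuous_fst.prodMk continuous_const).continuousOn) hmapX
    have hUc : ContinuousOn sU (Rect a b c d) := by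
      rw [hsU]
      refine continuousOn_finset_sum _ fun i hi => ContinuousOn.div_const (ContinuousOn.mul
        ?_ ((continuous_fst.sub continuous_const).pow i).continuousOn) _
      exact (hFc i (by have := Finset.mem_range.mp hi; omega) 0 (by omega)).comp
        ((continuous_const.prodMk continuous_snd).continuousOn) hmapY
    have hWc : ContinuousOn sW (Rect a b c d) := by
      rw [hsW]
      refine continuousOn_finset_sum _ fun i hi => ContinuousOn.div_const (ContinuousOn.mul
        ?_ ((continuous_fst.sub continuous_const).pow i).continuousOn) _
      refine continuousOn_finset_sum _ fun j hj => ContinuousOn.div_const (ContinuousOn.mul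
        continuousOn_const ((continuous_snd.sub continuous_const).pow j).continuousOn) _
    rw [hsB]
    exact (hVc.add hUc).sub hWc
  -- reproduction
  have hsecV : ∀ x : ℝ, (fun y => sV (x, y)) ∈ bSpan (n l) c d := by
    intro x
    have hrep : (fun y => sV (x, y)) = ∑ j ∈ Finset.range (n l + 1),
        (Fd 0 j (x, y0) / (j.factorial : ℝ)) • (fun y : ℝ => (y - y0) ^ j) := by
      funext y
      simp only [hsV, Finset.sum_apply, Pi.smul_apply, smul_eq_mul]
      exact Finset.sum_congr rfl fun j _ => by ring
    rw [hrep]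
    refine Submodule.sum_mem _ fun j hj => Submodule.smul_mem _ _ (powx_mem hcd y0 ?_)
    exact Nat.lt_succ_iff.mp (Finset.mem_range.mp hj)
  have hsecU : ∀ y : ℝ, (fun x => sU (x, y)) ∈ bSpan (m k) a b := by
    intro y
    have hrep : (fun x => sU (x, y)) = ∑ i ∈ Finset.range (m k + 1),
        (Fd i 0 (x0, y) / (i.factorial : ℝ)) • (fun x : ℝ => (x - x0) ^ i) := by
      funext x
      simp only [hsU, Finset.sum_apply, Pi.smul_apply, smul_eq_mul]
      exact Finset.sum_congr rfl fun i _ => by ring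
    rw [hrep]
    refine Submodule.sum_mem _ fun i hi => Submodule.smul_mem _ _ (powx_mem hab x0 ?_)
    exact Nat.lt_succ_iff.mp (Finset.mem_range.mp hi)
  have hsecWx : ∀ y : ℝ, (fun x => sW (x, y)) ∈ bSpan (m k) a b := by
    intro y
    have hrep : (fun x => sW (x, y)) = ∑ i ∈ Finset.range (m k + 1),
        ((∑ j ∈ Finset.range (n l + 1), Fd i j (x0, y0) * (y - y0) ^ j / (j.factorial : ℝ))
          / (i.factorial : ℝ)) • (fun x : ℝ => (x - x0) ^ i) := by
      funext x
      simp only [hsW, Finset.sum_apply, Pi.smul_apply, smul_eq_mul]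
      exact Finset.sum_congr rfl fun i _ => by ring
    rw [hrep]
    refine Submodule.sum_mem _ fun i hi => Submodule.smul_mem _ _ (powx_mem hab x0 ?_)
    exact Nat.lt_succ_iff.mp (Finset.mem_range.mp hi)
  have hsecWy : ∀ x : ℝ, (fun y => sW (x, y)) ∈ bSpan (n l) c d := by
    intro x
    have hrep : (fun y => sW (x, y)) = ∑ i ∈ Finset.range (m k + 1),
        ∑ j ∈ Finset.range (n l + 1),
          ((Fd i j (x0, y0) / (j.factorial : ℝ)) * ((x - x0) ^ i / (i.factorial : ℝ)))
            • (fun y : ℝ => (y - y0) ^ j) := by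
      funext y
      simp only [hsW, Finset.sum_apply, Pi.smul_apply, smul_eq_mul]
      refine Finset.sum_congr rfl fun i _ => ?_
      rw [Finset.sum_mul, Finset.sum_div]
      exact Finset.sum_congr rfl fun j _ => by ring
    rw [hrep]
    refine Submodule.sum_mem _ fun i _ => Submodule.sum_mem _ fun j hj =>
      Submodule.smul_mem _ _ (powx_mem hcd y0 ?_)
    exact Nat.lt_succ_iff.mp (Finset.mem_range.mp hj)
  have hPU : ∀ z, PP (m k) (m r) a b sU z = sU z := fun z => PP_fix hEx hsecU z
  have hPW : ∀ z, PP (m k) (m r) a b sW z = sW z := fun z => PP_fix hEx hsecWx z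
  have hQV : ∀ z, QQ (n l) (n r) c d sV z = sV z := fun z => QQ_fix hEy hsecV z
  have hQW : ∀ z, QQ (n l) (n r) c d sW z = sW z := fun z => QQ_fix hEy hsecWy z
  have hPQU : ∀ z, PP (m k) (m r) a b (QQ (n l) (n r) c d sU) z = QQ (n l) (n r) c d sU z :=
    fun z => PP_fix hEx (secX_QQ hsecU) z
  have hQall : ∀ w, QQ (n l) (n r) c d sB w = sV w + QQ (n l) (n r) c d sU w - sW w := by
    intro w
    rw [hsB]
    rw [QQ_sub (fun w => sV w + sU w) sW, QQ_add' sV sU, hQV w, hQW w]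
  have hLs : ∀ z : ℝ × ℝ, PP (m k) (m r) a b sB z + QQ (n l) (n r) c d sB z -
      PP (m k) (m r) a b (QQ (n l) (n r) c d sB) z = sB z := by
    intro z
    have hPs : PP (m k) (m r) a b sB z = PP (m k) (m r) a b sV z + sU z - sW z := by
      rw [hsB]
      rw [PP_sub (fun w => sV w + sU w) sW, PP_add' sV sU, hPU z, hPW z]
    have hPQs : PP (m k) (m r) a b (QQ (n l) (n r) c d sB) z =
        PP (m k) (m r) a b sV z + QQ (n l) (n r) c d sU z - sW z := by
      rw [show QQ (n l) (n r) c d sB = fun w => sV w + QQ (n l) (n r) c d sU w - sW w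
        from funext hQall]
      rw [PP_sub (fun w => sV w + QQ (n l) (n r) c d sU w) sW,
        PP_add' sV (fun w => QQ (n l) (n r) c d sU w), hPQU z, hPW z]
    rw [hPs, hQall z, hPQs, hsB]
    ring
  -- operator bound
  set C1 : ℝ := popC (m k) (m r) a b with hC1def
  set C2 : ℝ := popC (n l) (n r) c d with hC2def
  have hC1 : 0 ≤ C1 := popC_nonneg
  have hC2 : 0 ≤ C2 := popC_nonneg
  set Cop : ℝ := C1 + C2 + C1 * C2 with hCop
  have hCop0 : 0 ≤ Cop := by rw [hCop]; positivity
  have hLbd : ∀ (H : ℝ × ℝ → ℝ) (M : ℝ), (∀ w ∈ Rect a b c d, |H w| ≤ M) →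
      ∀ z ∈ Rect a b c d,
        |PP (m k) (m r) a b H z + QQ (n l) (n r) c d H z -
          PP (m k) (m r) a b (QQ (n l) (n r) c d H) z| ≤ Cop * M := by
    intro H M hH z hz
    have h1 := PP_bound (mk := m k) (mr := m r) hab hcd hz hH
    have h2 := QQ_bound (nl := n l) (nr := n r) hab hcd hz hH
    have h3 : |PP (m k) (m r) a b (QQ (n l) (n r) c d H) z| ≤ C1 * (C2 * M) :=
      PP_bound hab hcd hz (fun w hw => QQ_bound hab hcd hw hH)
    calc |PP (m k) (m r) a b H z + QQ (n l) (n r) c d H z -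
          PP (m k) (m r) a b (QQ (n l) (n r) c d H) z|
        ≤ |PP (m k) (m r) a b H z + QQ (n l) (n r) c d H z| +
            |PP (m k) (m r) a b (QQ (n l) (n r) c d H) z| := abs_sub _ _
      _ ≤ |PP (m k) (m r) a b H z| + |QQ (n l) (n r) c d H z| +
            |PP (m k) (m r) a b (QQ (n l) (n r) c d H) z| := by
          have := abs_add_le (PP (m k) (m r) a b H z) (QQ (n l) (n r) c d H z)
          linarith
      _ ≤ Cop * M := by rw [hCop]; linarith
  -- opN facts
  set ON : ℝ := opN (Rect a b c d)
    (fun G z => PP (m k) (m r) a b G z + QQ (n l) (n r) c d G z -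
      PP (m k) (m r) a b (QQ (n l) (n r) c d G) z) with hON
  have hG1 : ∀ (G : ℝ × ℝ → ℝ), ContinuousOn G (Rect a b c d) →
      supN (Rect a b c d) G ≤ 1 → ∀ w ∈ Rect a b c d, |G w| ≤ 1 := by
    intro G hGc hGs w hw
    obtain ⟨C0, hC0⟩ := hRcomp.exists_bound_of_continuousOn hGc
    exact le_trans (le_supN (fun w' hw' => by simpa using hC0 w' hw') hw) hGs
  have hbdd : BddAbove (Set.range fun (G : {G : ℝ × ℝ → ℝ //
      ContinuousOn G (Rect a b c d) ∧ supN (Rect a b c d) G ≤ 1}) =>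
        supN (Rect a b c d) (fun z => PP (m k) (m r) a b G.1 z + QQ (n l) (n r) c d G.1 z -
          PP (m k) (m r) a b (QQ (n l) (n r) c d G.1) z)) := by
    refine ⟨Cop, ?_⟩
    rintro y ⟨G, rfl⟩
    refine supN_le hCop0 fun z hz => ?_
    have := hLbd G.1 1 (hG1 G.1 G.2.1 G.2.2) z hz
    simpa using this
  have hON0 : 0 ≤ ON := by
    have hz0 : ContinuousOn (fun _ : ℝ × ℝ => (0:ℝ)) (Rect a b c d) ∧
        supN (Rect a b c d) (fun _ : ℝ × ℝ => (0:ℝ)) ≤ 1 := by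
      constructor
      · exact continuousOn_const
      · refine supN_le zero_le_one fun z hz => by simp
    have hval : 0 ≤ supN (Rect a b c d)
        (fun z => PP (m k) (m r) a b (fun _ => (0:ℝ)) z + QQ (n l) (n r) c d (fun _ => (0:ℝ)) z -
          PP (m k) (m r) a b (QQ (n l) (n r) c d (fun _ => (0:ℝ))) z) := by
      have : ∀ z ∈ Rect a b c d, |PP (m k) (m r) a b (fun _ => (0:ℝ)) z
          + QQ (n l) (n r) c d (fun _ => (0:ℝ)) z -
          PP (m k) (m r) a b (QQ (n l) (n r) c d (fun _ => (0:ℝ))) z| ≤ Cop := by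
        intro z hz
        have := hLbd (fun _ => (0:ℝ)) 1 (fun w hw => by simp) z hz
        have h1 : Cop * 1 = Cop := mul_one _
        linarith [this]
      exact le_trans (abs_nonneg _) (le_supN this hRne)
    rw [hON]
    exact le_trans hval (le_ciSup hbdd ⟨(fun _ => (0:ℝ)), hz0⟩)
  -- main pointwise estimate
  have hmain : ∀ z ∈ Rect a b c d,
      |Fd 0 0 z - (PP (m k) (m r) a b (Fd 0 0) z + QQ (n l) (n r) c d (Fd 0 0) z -
        PP (m k) (m r) a b (QQ (n l) (n r) c d (Fd 0 0)) z)| ≤ (1 + ON) * cB := by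
    intro z hz
    set E : ℝ × ℝ → ℝ := fun w => Fd 0 0 w - sB w with hE
    have hsplit : Fd 0 0 z - (PP (m k) (m r) a b (Fd 0 0) z + QQ (n l) (n r) c d (Fd 0 0) z -
        PP (m k) (m r) a b (QQ (n l) (n r) c d (Fd 0 0)) z)
        = E z - (PP (m k) (m r) a b E z + QQ (n l) (n r) c d E z -
          PP (m k) (m r) a b (QQ (n l) (n r) c d E) z) := by
      have e1 : PP (m k) (m r) a b E z = PP (m k) (m r) a b (Fd 0 0) z -
          PP (m k) (m r) a b sB z := PP_sub _ _ _
      have e2 : QQ (n l) (n r) c d E z = QQ (n l) (n r) c d (Fd 0 0) z -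
          QQ (n l) (n r) c d sB z := QQ_sub _ _ _
      have e3 : PP (m k) (m r) a b (QQ (n l) (n r) c d E) z =
          PP (m k) (m r) a b (QQ (n l) (n r) c d (Fd 0 0)) z -
          PP (m k) (m r) a b (QQ (n l) (n r) c d sB) z := by
        have hfun : QQ (n l) (n r) c d E = fun w => QQ (n l) (n r) c d (Fd 0 0) w -
            QQ (n l) (n r) c d sB w := funext fun w => QQ_sub _ _ w
        rw [hfun, PP_sub]
      have e4 := hLs z
      rw [e1, e2, e3]
      have hEz : E z = Fd 0 0 z - sB z := rfl
      rw [hEz]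
      linarith [e4]
    rw [hsplit]
    by_cases hc0 : cB = 0
    · have hE0 : ∀ w ∈ Rect a b c d, E w = 0 := by
        intro w hw
        have := hTay w hw
        rw [hc0] at this
        exact abs_nonpos_iff.mp this
      have hnodesX : ∀ i' : Fin (m r + 1), (node (m r) a b i'.1, z.2) ∈ Rect a b c d :=
        fun i' => mem_Rect.mpr ⟨node_mem_Icc hab.le _ _ (Nat.lt_succ_iff.mp i'.2),
          (mem_Rect.mp hz).2⟩
      have hQE0 : ∀ w ∈ Rect a b c d, QQ (n l) (n r) c d E w = 0 := by
        intro w hw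
        rw [QQ_sample]
        refine Finset.sum_eq_zero fun j' _ => ?_
        rw [hE0 (w.1, node (n r) c d j'.1) (mem_Rect.mpr ⟨(mem_Rect.mp hw).1,
          node_mem_Icc hcd.le _ _ (Nat.lt_succ_iff.mp j'.2)⟩), mul_zero]
      have h1 : PP (m k) (m r) a b E z = 0 := by
        rw [PP_sample]
        refine Finset.sum_eq_zero fun i' _ => ?_
        rw [hE0 _ (hnodesX i'), mul_zero]
      have h2 : QQ (n l) (n r) c d E z = 0 := hQE0 z hz
      have h3 : PP (m k) (m r) a b (QQ (n l) (n r) c d E) z = 0 := by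
        rw [PP_sample]
        refine Finset.sum_eq_zero fun i' _ => ?_
        rw [hQE0 _ (hnodesX i'), mul_zero]
      rw [h1, h2, h3, hE0 z hz]
      simp [hc0]
    · have hcpos : 0 < cB := lt_of_le_of_ne hcB0 (Ne.symm hc0)
      set G : ℝ × ℝ → ℝ := fun w => E w / cB with hG
      have hGub : ∀ w ∈ Rect a b c d, |G w| ≤ 1 := by
        intro w hw
        rw [hG]
        simp only
        rw [abs_div, abs_of_pos hcpos, div_le_one hcpos]
        exact hTay w hw
      have hGc : ContinuousOn G (Rect a b c d) := by
        rw [hG]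
        exact (((hFc 0 (by omega) 0 (by omega)).sub hsBc).div_const cB)
      have hGsup : supN (Rect a b c d) G ≤ 1 := supN_le zero_le_one hGub
      have h5 : |PP (m k) (m r) a b G z + QQ (n l) (n r) c d G z -
          PP (m k) (m r) a b (QQ (n l) (n r) c d G) z| ≤
          supN (Rect a b c d) (fun w => PP (m k) (m r) a b G w + QQ (n l) (n r) c d G w -
            PP (m k) (m r) a b (QQ (n l) (n r) c d G) w) := by
        refine le_supN (f := fun w => PP (m k) (m r) a b G w + QQ (n l) (n r) c d G w -
          PP (m k) (m r) a b (QQ (n l) (n r) c d G) w) (cc := Cop) (fun w hw => ?_) hz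
        have := hLbd G 1 hGub w hw
        simpa using this
      have h6 : supN (Rect a b c d) (fun w => PP (m k) (m r) a b G w + QQ (n l) (n r) c d G w -
          PP (m k) (m r) a b (QQ (n l) (n r) c d G) w) ≤ ON := by
        rw [hON]
        exact le_ciSup hbdd ⟨G, hGc, hGsup⟩
      have hEG : E = fun w => cB * G w := by
        funext w
        rw [hG]
        field_simp
      have h7 : PP (m k) (m r) a b E z + QQ (n l) (n r) c d E z -
          PP (m k) (m r) a b (QQ (n l) (n r) c d E) z
          = cB * (PP (m k) (m r) a b G z + QQ (n l) (n r) c d G z -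
            PP (m k) (m r) a b (QQ (n l) (n r) c d G) z) := by
        have p1 : PP (m k) (m r) a b E z = cB * PP (m k) (m r) a b G z := by
          rw [hEG, PP_cmul]
        have p2 : QQ (n l) (n r) c d E z = cB * QQ (n l) (n r) c d G z := by
          rw [hEG, QQ_cmul]
        have p3 : PP (m k) (m r) a b (QQ (n l) (n r) c d E) z =
            cB * PP (m k) (m r) a b (QQ (n l) (n r) c d G) z := by
          rw [hEG]
          have : QQ (n l) (n r) c d (fun w => cB * G w) = fun w => cB * QQ (n l) (n r) c d G w :=
            funext fun w => QQ_cmul _ _ w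
          rw [this, PP_cmul]
        rw [p1, p2, p3]
        ring
      calc |E z - (PP (m k) (m r) a b E z + QQ (n l) (n r) c d E z -
            PP (m k) (m r) a b (QQ (n l) (n r) c d E) z)|
          ≤ |E z| + |PP (m k) (m r) a b E z + QQ (n l) (n r) c d E z -
            PP (m k) (m r) a b (QQ (n l) (n r) c d E) z| := abs_sub _ _
        _ ≤ cB + cB * ON := by
            have t1 : |E z| ≤ cB := hTay z hz
            have t2 : |PP (m k) (m r) a b E z + QQ (n l) (n r) c d E z -
                PP (m k) (m r) a b (QQ (n l) (n r) c d E) z| = cB *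
                |PP (m k) (m r) a b G z + QQ (n l) (n r) c d G z -
                  PP (m k) (m r) a b (QQ (n l) (n r) c d G) z| := by
              rw [h7, abs_mul, abs_of_pos hcpos]
            have t3 : cB * |PP (m k) (m r) a b G z + QQ (n l) (n r) c d G z -
                PP (m k) (m r) a b (QQ (n l) (n r) c d G) z| ≤ cB * ON :=
              mul_le_mul_of_nonneg_left (le_trans h5 h6) hcpos.le
            linarith
        _ = (1 + ON) * cB := by ring
  -- conclusion
  have hfinal : (1 + ON) * cB = (1 + ON) * A /
      ((2 : ℝ) ^ (m k + n l + 2) * ((m k + 1).factorial : ℝ) * ((n l + 1).factorial : ℝ)) *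
      (b - a) ^ (m k + n l + 2) := by
    rw [hcB]
    ring
  rw [← hfinal]
  exact supN_le (mul_nonneg (by linarith) hcB0) hmain
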